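/- arXiv:2301.12143 — 4 statements merged into one kernel-verified Lean document; each statement's English description precedes it below -/
import Mathlib

section
/- For every complex number s with Re s > 0 and s ≠ 1, the integral ∫_ℝ (u − i)² · (1 + u²)^{-(s+3)/2} du (a ℂ-valued integral over the real line, where i is the imaginary unit) converges and equals − Γ_ℝ(s) · Γ_ℝ(s+1) / (Γ_ℝ(s+3) · Γ_ℝ(s−1)). (This is the integral identity underlying Lemma 'ai' of the paper: after the Iwasawa decomposition of the SL₂(ℝ)-matrix J⁻¹·(1 u; 0 1) with J = (0 1; −1 0), the integral ∫_ℝ h^{(s)}(J⁻¹(1 u; 0 1)) du takes exactly this form, and Lemma 'ai' asserts it equals −Γ_ℝ(s)Γ_ℝ(s+1)/(Γ_ℝ(s+3)Γ_ℝ(s−1)).) -/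
open MeasureTheory

open Set

/-- `Γ_ℝ(z) = π^{-z/2} Γ(z/2)`. -/
noncomputable def GammaR (z : ℂ) : ℂ := (Real.pi : ℂ) ^ (-z / 2) * Complex.Gamma (z / 2)

lemma cont_base (a : ℂ) : Continuous (fun u : ℝ => ((1 + u ^ 2 : ℝ) : ℂ) ^ (-a)) := by
  rw [continuous_iff_continuousAt]
  intro x
  apply (continuousAt_cpow_const ?_).comp (by fun_prop)
  exact Complex.mem_slitPlane_iff.mpr (Or.inl (by simp only [Complex.ofReal_re]; positivity))

lemma norm_base (a : ℂ) (u : ℝ) :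
    ‖((1 + u ^ 2 : ℝ) : ℂ) ^ (-a)‖ = (1 + u ^ 2 : ℝ) ^ (-a.re) := by
  rw [Complex.norm_cpow_eq_rpow_re_of_pos (by positivity)]
  simp

lemma integ_base {a : ℂ} (ha : 1 / 2 < a.re) :
    Integrable (fun u : ℝ => ((1 + u ^ 2 : ℝ) : ℂ) ^ (-a)) := by
  have h : Integrable (fun u : ℝ => ((1 : ℝ) + ‖u‖ ^ 2) ^ (-(2 * a.re) / 2)) :=
    integrable_rpow_neg_one_add_norm_sq (by simp; linarith)
  refine h.mono' (cont_base a).aestronglyMeasurable (Filter.Eventually.of_forall fun u => ?_)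
  rw [norm_base]
  simp only [Real.norm_eq_abs, sq_abs]
  rw [show -(2 * a.re) / 2 = -a.re by ring]

lemma image_div_one_sub : (fun x : ℝ => x / (1 - x)) '' Ioo 0 1 = Ioi 0 := by
  ext t
  simp only [mem_image, mem_Ioo, mem_Ioi]
  constructor
  · rintro ⟨x, ⟨hx0, hx1⟩, rfl⟩
    exact div_pos hx0 (by linarith)
  · intro ht
    refine ⟨t / (1 + t), ⟨div_pos ht (by linarith), by rw [div_lt_one (by linarith)]; linarith⟩,
      ?_⟩
    have : (1:ℝ) + t ≠ 0 := by linarith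
    field_simp
    ring

lemma beta_Ioi {a b : ℂ} (ha : 0 < a.re) (hb : 0 < b.re) :
    ∫ y in Ioi (0 : ℝ), (y : ℂ) ^ (a - 1) * ((1 + y : ℝ) : ℂ) ^ (-(a + b)) =
      Complex.betaIntegral a b := by
  have hderiv : ∀ x ∈ Ioo (0:ℝ) 1, HasDerivWithinAt (fun x : ℝ => x / (1 - x))
      ((1 - x)⁻¹ ^ 2) (Ioo 0 1) x := by
    intro x hx
    have h1 : (1:ℝ) - x ≠ 0 := by rw [mem_Ioo] at hx; intro h; linarith [hx.2, h]
    have := (hasDerivAt_id x).div ((hasDerivAt_id x).const_sub 1) h1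
    have h2 : (1 - x)⁻¹ ^ 2 = (1 * (1 - id x) - id x * -1) / (1 - id x) ^ 2 := by
      simp only [id]; field_simp; ring
    rw [h2]; exact this.hasDerivWithinAt
  have hinj : InjOn (fun x : ℝ => x / (1 - x)) (Ioo 0 1) := by
    intro x hx y hy h
    rw [mem_Ioo] at hx hy
    have h1 : (1:ℝ) - x ≠ 0 := by intro h; linarith [hx.2]
    have h2 : (1:ℝ) - y ≠ 0 := by intro h; linarith [hy.2]
    field_simp at h
    linarith
  have := integral_image_eq_integral_abs_deriv_smul measurableSet_Ioo hderiv hinj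
    (fun y : ℝ => (y : ℂ) ^ (a - 1) * ((1 + y : ℝ) : ℂ) ^ (-(a + b)))
  rw [image_div_one_sub] at this
  rw [this, Complex.betaIntegral, intervalIntegral.integral_of_le zero_le_one,
    integral_Ioc_eq_integral_Ioo]
  refine setIntegral_congr_fun measurableSet_Ioo fun x hx => ?_
  rw [mem_Ioo] at hx
  have h0 : (0:ℝ) < x := hx.1
  have h1 : (0:ℝ) < 1 - x := by linarith [hx.2]
  have hx0 : (x : ℂ) ≠ 0 := by exact_mod_cast h0.ne'
  have hx1 : ((1 - x : ℝ) : ℂ) ≠ 0 := by exact_mod_cast h1.ne'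
  have e1 : ((x / (1 - x) : ℝ) : ℂ) ^ (a - 1) =
      (x : ℂ) ^ (a - 1) * ((1 - x : ℝ) : ℂ) ^ (-(a - 1)) := by
    rw [show ((x / (1 - x) : ℝ) : ℂ) = ((x:ℝ):ℂ) * (((1 - x)⁻¹ : ℝ):ℂ) by push_cast; ring,
      Complex.mul_cpow_ofReal_nonneg h0.le (inv_nonneg.mpr h1.le)]
    congr 1
    rw [Complex.ofReal_inv, Complex.inv_cpow _ _ (by
      rw [Complex.arg_ofReal_of_nonneg h1.le]; exact Real.pi_ne_zero.symm), ← Complex.cpow_neg]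
  have e2 : ((1 + x / (1 - x) : ℝ) : ℂ) ^ (-(a + b)) = ((1 - x : ℝ) : ℂ) ^ (a + b) := by
    rw [show (1 + x / (1 - x) : ℝ) = (1 - x)⁻¹ by field_simp; ring]
    rw [Complex.ofReal_inv, Complex.inv_cpow _ _ (by
      rw [Complex.arg_ofReal_of_nonneg h1.le]; exact Real.pi_ne_zero.symm), ← Complex.cpow_neg,
      neg_neg]
  rw [e1, e2, Complex.real_smul]
  have e3 : ((|(1 - x)⁻¹ ^ 2| : ℝ) : ℂ) = ((1 - x : ℝ) : ℂ) ^ (-2 : ℂ) := by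
    rw [abs_of_pos (by positivity)]
    rw [show (((1 - x)⁻¹ ^ 2 : ℝ) : ℂ) = (((1-x:ℝ):ℂ) ^ (2:ℕ))⁻¹ by push_cast; rw [inv_pow]]
    rw [← Complex.cpow_natCast, ← Complex.cpow_neg]
    norm_num
  rw [e3]
  have h4 : ((1-x:ℝ):ℂ) ^ (-2:ℂ) * (((1-x:ℝ):ℂ) ^ (-(a-1)) * ((1-x:ℝ):ℂ) ^ (a+b)) =
      ((1-x:ℝ):ℂ) ^ (b-1) := by
    rw [← Complex.cpow_add _ _ hx1, ← Complex.cpow_add _ _ hx1,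
      show (-2 + (-(a-1) + (a+b)) : ℂ) = b - 1 by ring]
  calc ((1-x:ℝ):ℂ) ^ (-2:ℂ) * ((x:ℂ) ^ (a-1) * ((1-x:ℝ):ℂ) ^ (-(a-1)) * ((1-x:ℝ):ℂ) ^ (a+b))
      = (x:ℂ) ^ (a-1) * (((1-x:ℝ):ℂ) ^ (-2:ℂ) *
        (((1-x:ℝ):ℂ) ^ (-(a-1)) * ((1-x:ℝ):ℂ) ^ (a+b))) := by ring
    _ = (x:ℂ) ^ (a-1) * ((1-x:ℝ):ℂ) ^ (b-1) := by rw [h4]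
    _ = (x:ℂ) ^ (a-1) * (1 - (x:ℂ)) ^ (b-1) := by push_cast; ring

lemma image_sq : (fun x : ℝ => x ^ 2) '' Ioi 0 = Ioi 0 := by
  ext t
  simp only [mem_image, mem_Ioi]
  constructor
  · rintro ⟨x, hx, rfl⟩; positivity
  · intro ht
    exact ⟨Real.sqrt t, Real.sqrt_pos.mpr ht, Real.sq_sqrt ht.le⟩

lemma sq_sub (a : ℂ) :
    ∫ y in Ioi (0 : ℝ), (y : ℂ) ^ ((1/2 : ℂ) - 1) * ((1 + y : ℝ) : ℂ) ^ (-a) =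
      2 * ∫ x in Ioi (0 : ℝ), ((1 + x ^ 2 : ℝ) : ℂ) ^ (-a) := by
  have hderiv : ∀ x ∈ Ioi (0:ℝ), HasDerivWithinAt (fun x : ℝ => x ^ 2) (2 * x) (Ioi 0) x := by
    intro x hx
    simpa using ((hasDerivAt_pow 2 x).hasDerivWithinAt : HasDerivWithinAt _ _ (Ioi 0) x)
  have hinj : InjOn (fun x : ℝ => x ^ 2) (Ioi 0) := by
    intro x hx y hy h
    simp only [mem_Ioi] at hx hy
    have h' : x ^ 2 = y ^ 2 := h
    nlinarith [h']
  have := integral_image_eq_integral_abs_deriv_smul measurableSet_Ioi hderiv hinj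
    (fun y : ℝ => (y : ℂ) ^ ((1/2 : ℂ) - 1) * ((1 + y : ℝ) : ℂ) ^ (-a))
  rw [image_sq] at this
  rw [this, ← integral_const_mul]
  refine setIntegral_congr_fun measurableSet_Ioi fun x hx => ?_
  simp only [mem_Ioi] at hx
  have e1 : ((x ^ 2 : ℝ) : ℂ) ^ ((1/2 : ℂ) - 1) = ((x⁻¹ : ℝ) : ℂ) := by
    rw [show ((1/2 : ℂ) - 1) = ((-(1/2) : ℝ) : ℂ) by norm_num, ← Complex.ofReal_cpow (by positivity)]
    congr 1
    rw [show (x ^ 2 : ℝ) = x ^ (2 : ℝ) by rw [Real.rpow_two], ← Real.rpow_mul hx.le]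
    norm_num
    exact Real.rpow_neg_one x
  rw [Complex.real_smul, e1]
  have hx0 : (x : ℂ) ≠ 0 := by exact_mod_cast hx.ne'
  rw [abs_of_pos (by positivity)]
  push_cast
  field_simp

lemma even_int {f : ℝ → ℂ} (hf : Integrable f) (he : ∀ x, f (-x) = f x) :
    ∫ x, f x = 2 * ∫ x in Ioi (0:ℝ), f x := by
  rw [← intervalIntegral.integral_Iic_add_Ioi (b := (0:ℝ)) (μ := volume) hf.integrableOn hf.integrableOn]
  have : ∫ x in Iic (0:ℝ), f x = ∫ x in Ioi (0:ℝ), f x := by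
    have B := integral_comp_neg_Iic (0:ℝ) (fun y => f (-y))
    simp only [neg_neg, neg_zero] at B
    rw [B]
    exact setIntegral_congr_fun measurableSet_Ioi fun x _ => he x
  rw [this]; ring

lemma odd_int {f : ℝ → ℂ} (ho : ∀ x, f (-x) = -f x) : ∫ x, f x = 0 := by
  have A : ∫ x, f (-x) = ∫ x, f x :=
    (Measure.measurePreserving_neg (volume : Measure ℝ)).integral_comp
      (Homeomorph.neg ℝ).measurableEmbedding f
  simp_rw [ho, integral_neg] at A
  have h2 : (2:ℂ) * ∫ x, f x = 0 := by linear_combination -A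
  simpa using h2

lemma int_val {a : ℂ} (ha : 1 / 2 < a.re) :
    ∫ u : ℝ, ((1 + u ^ 2 : ℝ) : ℂ) ^ (-a) =
      (Real.sqrt Real.pi : ℂ) * Complex.Gamma (a - 1/2) / Complex.Gamma a := by
  have ha0 : 0 < a.re := by linarith
  have h1 := even_int (integ_base ha) (fun x => by norm_num)
  have h2 := sq_sub a
  have hre : 0 < (a - 1/2 : ℂ).re := by
    rw [Complex.sub_re]
    norm_num
    linarith
  have h3 := beta_Ioi (a := (1/2 : ℂ)) (b := a - 1/2) (by norm_num) hre
  rw [show (1/2 + (a - 1/2) : ℂ) = a by ring] at h3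
  have h4 := Complex.Gamma_mul_Gamma_eq_betaIntegral (s := (1/2 : ℂ)) (t := a - 1/2)
    (by norm_num) hre
  rw [show (1/2 + (a - 1/2) : ℂ) = a by ring] at h4
  have hGa : Complex.Gamma a ≠ 0 := Complex.Gamma_ne_zero_of_re_pos ha0
  have hpi : ((Real.pi : ℝ) : ℂ) ^ (1/2 : ℂ) = (Real.sqrt Real.pi : ℂ) := by
    rw [show ((1:ℂ)/2) = ((1/2 : ℝ) : ℂ) by norm_num, ← Complex.ofReal_cpow Real.pi_pos.le,
      ← Real.sqrt_eq_rpow]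
  have hhalf : Complex.Gamma (1/2 : ℂ) = (Real.sqrt Real.pi : ℂ) :=
    Complex.Gamma_one_half_eq.trans hpi
  rw [h1, ← h2, h3, eq_div_iff hGa, mul_comm (Complex.betaIntegral _ _), ← h4, hhalf]

lemma re2 (z : ℂ) : (z / 2).re = z.re / 2 := by
  rw [show (2:ℂ) = ((2:ℝ):ℂ) by norm_num, Complex.div_ofReal_re]

lemma alg (C g G s : ℂ) (hG : G ≠ 0) (h1 : s - 1 ≠ 0) (h2 : s + 1 ≠ 0) :
    C * g / ((s-1)/2 * G) - 2 * (C * (s/2 * g) / ((s+1)/2 * ((s-1)/2 * G))) =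
    -(C * g * ((s-1)/2 * G)) / ((s+1)/2 * ((s-1)/2 * G) * G) := by
  have hd1 : ((s-1)/2 * G) ≠ 0 := mul_ne_zero (by simpa using h1) hG
  have hd2 : ((s+1)/2 * ((s-1)/2 * G)) ≠ 0 := mul_ne_zero (by simpa using h2) hd1
  have hd3 : ((s+1)/2 * ((s-1)/2 * G) * G) ≠ 0 := mul_ne_zero hd2 hG
  rw [← mul_div_assoc, div_sub_div _ _ hd1 hd2, div_eq_div_iff (mul_ne_zero hd1 hd2) hd3]
  ring

set_option maxHeartbeats 2000000 in
/-- For `Re s > 0`, `s ≠ 1`, the integral `∫_ℝ (u−i)² (1+u²)^{-(s+3)/2} du`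
converges and equals `−Γ_ℝ(s)Γ_ℝ(s+1)/(Γ_ℝ(s+3)Γ_ℝ(s−1))`. -/
theorem stmt3 (s : ℂ) (hs : 0 < s.re) (hs1 : s ≠ 1) :
    Integrable (fun u : ℝ => ((u : ℂ) - Complex.I) ^ 2 * ((1 + u ^ 2 : ℝ) : ℂ) ^ (-(s + 3) / 2)) ∧
    ∫ u : ℝ, ((u : ℂ) - Complex.I) ^ 2 * ((1 + u ^ 2 : ℝ) : ℂ) ^ (-(s + 3) / 2) =
      -(GammaR s * GammaR (s + 1)) / (GammaR (s + 3) * GammaR (s - 1)) := by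
  have hb : ∀ u : ℝ, (0:ℝ) < 1 + u ^ 2 := fun u => by positivity
  have hbC : ∀ u : ℝ, ((1 + u^2 : ℝ) : ℂ) ≠ 0 := fun u => by exact_mod_cast (hb u).ne'
  simp_rw [neg_div]
  -- integrability of the main function
  have intMain : Integrable
      (fun u : ℝ => ((u : ℂ) - Complex.I) ^ 2 * ((1 + u ^ 2 : ℝ) : ℂ) ^ (-((s + 3) / 2))) := by
    have g := integrable_rpow_neg_one_add_norm_sq (E := ℝ) (μ := volume) (r := s.re + 1)
      (by simp; linarith)
    refine g.mono' (Continuous.aestronglyMeasurable ?_) (Filter.Eventually.of_forall fun u => ?_)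
    · exact ((Complex.continuous_ofReal.sub continuous_const).pow 2).mul (cont_base ((s+3)/2))
    · rw [norm_mul, norm_base ((s+3)/2) u, norm_pow]
      have e1 : ‖(u : ℂ) - Complex.I‖ ^ 2 = 1 + u ^ 2 := by
        rw [Complex.sq_norm]
        simp [Complex.normSq_apply]
        ring
      rw [e1, re2]
      rw [show (1 + u^2 : ℝ) * (1+u^2) ^ (-((s+3).re/2)) =
          (1+u^2) ^ (1 + -((s+3).re/2)) by
        rw [Real.rpow_add (hb u), Real.rpow_one]]
      simp only [Real.norm_eq_abs, sq_abs, Complex.add_re]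
      rw [show 1 + -((s.re + (3:ℂ).re)/2) = -(s.re+1)/2 by
        simp only [Complex.re_ofNat]; ring]
  refine ⟨intMain, ?_⟩
  -- auxiliary integrabilities
  have intF1 : Integrable (fun u : ℝ => ((1 + u^2 : ℝ) : ℂ) ^ (-((s+1)/2))) :=
    integ_base (by rw [re2]; simp only [Complex.add_re, Complex.one_re]; linarith)
  have intF2 : Integrable (fun u : ℝ => ((1 + u^2 : ℝ) : ℂ) ^ (-((s+3)/2))) :=
    integ_base (by rw [re2]; simp only [Complex.add_re, Complex.re_ofNat]; linarith)
  have intF3 : Integrable (fun u : ℝ => (u:ℂ) * ((1 + u^2 : ℝ) : ℂ) ^ (-((s+3)/2))) := by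
    have g := integrable_rpow_neg_one_add_norm_sq (E := ℝ) (μ := volume) (r := s.re + 2)
      (by simp; linarith)
    refine g.mono' (Continuous.aestronglyMeasurable ?_) (Filter.Eventually.of_forall fun u => ?_)
    · exact Complex.continuous_ofReal.mul (cont_base ((s+3)/2))
    · rw [norm_mul, norm_base ((s+3)/2) u, Complex.norm_real, re2]
      simp only [Real.norm_eq_abs, sq_abs, Complex.add_re, Complex.re_ofNat]
      have h1 : |u| ≤ (1+u^2) ^ ((1:ℝ)/2) := by
        have h2 : |u| ≤ Real.sqrt (1+u^2) := by
          rw [← Real.sqrt_sq_eq_abs]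
          exact Real.sqrt_le_sqrt (by linarith)
        rwa [Real.sqrt_eq_rpow] at h2
      calc |u| * (1+u^2) ^ (-((s.re+3)/2))
          ≤ (1+u^2) ^ ((1:ℝ)/2) * (1+u^2) ^ (-((s.re+3)/2)) := by
            exact mul_le_mul_of_nonneg_right h1 (Real.rpow_nonneg (hb u).le _)
        _ = (1+u^2) ^ (-(s.re+2)/2) := by
            rw [← Real.rpow_add (hb u)]
            congr 1
            ring
  -- pointwise decomposition
  have key : ∀ u : ℝ, ((u : ℂ) - Complex.I) ^ 2 * ((1 + u ^ 2 : ℝ) : ℂ) ^ (-((s + 3) / 2)) =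
      ((1 + u^2 : ℝ) : ℂ) ^ (-((s+1)/2)) - 2 * ((1 + u^2 : ℝ) : ℂ) ^ (-((s+3)/2)) -
      2 * Complex.I * ((u:ℂ) * ((1 + u^2 : ℝ) : ℂ) ^ (-((s+3)/2))) := by
    intro u
    have k1 : ((1 + u^2 : ℝ) : ℂ) ^ (-((s+1)/2)) =
        ((1 + u^2 : ℝ) : ℂ) * ((1 + u^2 : ℝ) : ℂ) ^ (-((s+3)/2)) := by
      rw [show (-((s+1)/2) : ℂ) = 1 + -((s+3)/2) by ring, Complex.cpow_add _ _ (hbC u),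
        Complex.cpow_one]
    rw [k1]
    have k2 : ((u : ℂ) - Complex.I) ^ 2 = ((1 + u^2 : ℝ) : ℂ) - 2 - 2 * Complex.I * (u:ℂ) := by
      push_cast
      linear_combination Complex.I_sq
    rw [k2]
    ring
  have hI0 : ∫ u : ℝ, (u:ℂ) * ((1 + u^2 : ℝ) : ℂ) ^ (-((s+3)/2)) = 0 := by
    refine odd_int fun x => ?_
    rw [show (1 + (-x)^2 : ℝ) = 1 + x^2 by ring]
    push_cast
    ring
  have hval1 := int_val (a := (s+1)/2)
    (by rw [re2]; simp only [Complex.add_re, Complex.one_re]; linarith)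
  have hval2 := int_val (a := (s+3)/2)
    (by rw [re2]; simp only [Complex.add_re, Complex.re_ofNat]; linarith)
  rw [show ((s+1)/2 - 1/2 : ℂ) = s/2 by ring] at hval1
  rw [show ((s+3)/2 - 1/2 : ℂ) = s/2 + 1 by ring] at hval2
  -- split the integral
  simp_rw [key]
  have i12 : Integrable (fun u : ℝ => ((1 + u^2 : ℝ) : ℂ) ^ (-((s+1)/2)) -
      2 * ((1 + u^2 : ℝ) : ℂ) ^ (-((s+3)/2))) := intF1.sub (intF2.const_mul 2)
  have i3 : Integrable (fun u : ℝ =>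
      2 * Complex.I * ((u:ℂ) * ((1 + u^2 : ℝ) : ℂ) ^ (-((s+3)/2)))) :=
    intF3.const_mul (2 * Complex.I)
  rw [integral_sub i12 i3, integral_sub intF1 (intF2.const_mul 2), integral_const_mul,
    integral_const_mul, hI0, hval1, hval2, mul_zero, sub_zero]
  -- Gamma facts
  set C : ℂ := (Real.sqrt Real.pi : ℂ) with hC
  have hπ : (Real.pi : ℂ) ≠ 0 := by exact_mod_cast Real.pi_ne_zero
  have hpx : ∀ x : ℂ, (Real.pi : ℂ) ^ x ≠ 0 := fun x => by
    simp [Complex.cpow_eq_zero_iff, hπ]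
  have hCpow : (Real.pi : ℂ) ^ (1/2 : ℂ) = C := by
    rw [show ((1:ℂ)/2) = ((1/2 : ℝ) : ℂ) by norm_num, ← Complex.ofReal_cpow Real.pi_pos.le,
      ← Real.sqrt_eq_rpow]
  have hG1 : Complex.Gamma ((s+1)/2) ≠ 0 := Complex.Gamma_ne_zero_of_re_pos
    (by rw [re2]; simp only [Complex.add_re, Complex.one_re]; linarith)
  have hG3 : Complex.Gamma ((s+3)/2) ≠ 0 := Complex.Gamma_ne_zero_of_re_pos
    (by rw [re2]; simp only [Complex.add_re, Complex.re_ofNat]; linarith)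
  have hGm : Complex.Gamma ((s-1)/2) ≠ 0 := by
    refine Complex.Gamma_ne_zero fun m => ?_
    intro h
    have hsm : s = 1 - 2 * (m:ℂ) := by linear_combination 2 * h
    rcases Nat.eq_zero_or_pos m with hm | hm
    · subst hm
      simp at hsm
      exact hs1 hsm
    · have : s.re = 1 - 2 * (m:ℝ) := by rw [hsm]; simp
      have hm1 : (1:ℝ) ≤ (m:ℝ) := by exact_mod_cast hm
      linarith
  have hs1' : ((s-1)/2 : ℂ) ≠ 0 := by
    intro h
    apply hs1
    have : s - 1 = 0 := by linear_combination 2 * h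
    linear_combination this
  have hsp1 : ((s+1)/2 : ℂ) ≠ 0 := fun h => by
    have : s = -1 := by linear_combination 2 * h
    rw [this] at hs
    norm_num at hs
  have hs0 : (s/2 : ℂ) ≠ 0 := fun h => by
    have : s = 0 := by linear_combination 2 * h
    rw [this] at hs
    norm_num at hs
  have g1 : Complex.Gamma ((s+1)/2) = (s-1)/2 * Complex.Gamma ((s-1)/2) := by
    have := Complex.Gamma_add_one _ hs1'
    rw [show ((s-1)/2 + 1 : ℂ) = (s+1)/2 by ring] at this
    exact this
  have g2 : Complex.Gamma ((s+3)/2) = (s+1)/2 * Complex.Gamma ((s+1)/2) := by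
    have := Complex.Gamma_add_one _ hsp1
    rw [show ((s+1)/2 + 1 : ℂ) = (s+3)/2 by ring] at this
    exact this
  have g3 : Complex.Gamma (s/2 + 1) = s/2 * Complex.Gamma (s/2) := Complex.Gamma_add_one _ hs0
  -- simplify the RHS
  have hRHS : -(GammaR s * GammaR (s + 1) / (GammaR (s + 3) * GammaR (s - 1))) =
      -(C * Complex.Gamma (s/2) * Complex.Gamma ((s+1)/2)) /
        (Complex.Gamma ((s+3)/2) * Complex.Gamma ((s-1)/2)) := by
    rw [← neg_div]
    simp only [GammaR]
    have e : (Real.pi:ℂ) ^ (-s/2) * (Real.pi:ℂ) ^ (-(s+1)/2) =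
        C * ((Real.pi:ℂ) ^ (-(s+3)/2) * (Real.pi:ℂ) ^ (-(s-1)/2)) := by
      rw [← Complex.cpow_add _ _ hπ, ← Complex.cpow_add _ _ hπ, ← hCpow,
        ← Complex.cpow_add _ _ hπ]
      congr 1
      ring
    rw [div_eq_div_iff (by exact mul_ne_zero (mul_ne_zero (hpx _) hG3) (mul_ne_zero (hpx _) hGm))
      (by exact mul_ne_zero hG3 hGm)]
    linear_combination (-(Complex.Gamma (s/2) * Complex.Gamma ((s+1)/2)) *
      Complex.Gamma ((s+3)/2) * Complex.Gamma ((s-1)/2)) * e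
  have hsm1 : s - 1 ≠ 0 := fun h => hs1 (by linear_combination h)
  have hsp : s + 1 ≠ 0 := fun h => by
    have : s = -1 := by linear_combination h
    rw [this] at hs
    norm_num at hs
  rw [hRHS, g2, g1, g3]
  exact alg C (Complex.Gamma (s/2)) (Complex.Gamma ((s-1)/2)) s hGm hsm1 hsp
end

section
/- The limit, as the real number λ tends to 0 from the right, of the complex number (−1/2) · (Γ_ℂ(λ+2)/Γ_ℂ(λ+1)) · (Γ_ℝ(λ+2)/Γ_ℝ(λ)) · (Γ_ℂ(2λ+2)/Γ_ℂ(2λ+1)) · (Γ_ℝ(2λ+2)/Γ_ℝ(2λ+1)) · (Γ_ℂ(λ−1/2)/Γ_ℂ(λ+1)) · (Γ_ℝ(2λ)·Γ_ℝ(2λ+1)/(Γ_ℝ(2λ+3)·Γ_ℝ(2λ−1))) · (Γ_ℂ(λ+1/2)/Γ_ℂ(λ+2)) equals −1. (This is the concluding limit computation in the proof of Proposition 2.9.2 of the paper, combining the normalizing factor ε(0,ρ∘φ_λ,ψ_ℝ)L(1,ρ∘φ_λ)/L(0,ρ∘φ_λ) with the composed integral operators M₂∘M_c∘M₂.) -/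
/-- `Γ_ℂ(z) = 2 (2π)^{-z} Γ(z)`. -/
noncomputable def GammaC (z : ℂ) : ℂ := 2 * ((2 * Real.pi : ℝ) : ℂ) ^ (-z) * Complex.Gamma z

private lemma pc_ne : (Real.pi : ℂ) ≠ 0 :=
  Complex.ofReal_ne_zero.mpr Real.pi_ne_zero

private lemma qc_ne : ((2 * Real.pi : ℝ) : ℂ) ≠ 0 :=
  Complex.ofReal_ne_zero.mpr (by positivity)

private lemma cpow_ne_pc (e : ℂ) : (Real.pi : ℂ) ^ e ≠ 0 := by
  simp [Complex.cpow_eq_zero_iff, Real.pi_ne_zero]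

private lemma cpow_ne_qc (e : ℂ) : ((2 * Real.pi : ℝ) : ℂ) ^ e ≠ 0 := by
  simp only [ne_eq, Complex.cpow_eq_zero_iff, not_and]
  intro h
  exact absurd h qc_ne

/-- `Γ_ℂ(w+1)/Γ_ℂ(w) = w/(2π)`. -/
private lemma rC (w : ℂ) (hw : w ≠ 0) (hg : Complex.Gamma w ≠ 0) :
    GammaC (w + 1) / GammaC w = w / ((2 * Real.pi : ℝ) : ℂ) := by
  simp only [GammaC]
  rw [Complex.Gamma_add_one w hw,
    show -(w + 1) = -w + (-1) by ring, Complex.cpow_add _ _ qc_ne, Complex.cpow_neg_one]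
  have h1 := cpow_ne_qc (-w)
  generalize hX : ((2 * Real.pi : ℝ) : ℂ) ^ (-w) = X at *
  generalize hG : Complex.Gamma w = G at *
  have h2 := qc_ne
  generalize hQ : ((2 * Real.pi : ℝ) : ℂ) = Q at *
  field_simp

/-- `Γ_ℝ(s+2)/Γ_ℝ(s) = (s/2)/π`. -/
private lemma rR (s : ℂ) (hs : s / 2 ≠ 0) (hg : Complex.Gamma (s / 2) ≠ 0) :
    GammaR (s + 2) / GammaR s = (s / 2) / (Real.pi : ℂ) := by
  simp only [GammaR]
  rw [show (s + 2) / 2 = s / 2 + 1 by ring, Complex.Gamma_add_one _ hs,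
    show -(s + 2) / 2 = -s / 2 + (-1) by ring, Complex.cpow_add _ _ pc_ne,
    Complex.cpow_neg_one]
  have h1 := cpow_ne_pc (-s / 2)
  generalize hX : (Real.pi : ℂ) ^ (-s / 2) = X at *
  generalize hG : Complex.Gamma (s / 2) = G at *
  have h2 := pc_ne
  generalize hP : (Real.pi : ℂ) = P at *
  field_simp

private lemma r4 (s : ℂ) (hs : s ≠ 0) (hgh : Complex.Gamma (s + 1 / 2) ≠ 0) :
    GammaR (2 * s + 2) / GammaR (2 * s + 1) =
      (Real.pi : ℂ) ^ ((1 : ℂ) / 2) / (Real.pi : ℂ) *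
        (s * Complex.Gamma s / Complex.Gamma (s + 1 / 2)) := by
  simp only [GammaR]
  rw [show (2 * s + 2) / 2 = s + 1 by ring, Complex.Gamma_add_one s hs,
    show (2 * s + 1) / 2 = s + 1 / 2 by ring,
    show -(2 * s + 2) / 2 = (-(2 * s + 1) / 2 + (1 : ℂ) / 2) + (-1) by ring,
    Complex.cpow_add _ _ pc_ne, Complex.cpow_add _ _ pc_ne, Complex.cpow_neg_one]
  have h1 := cpow_ne_pc (-(2 * s + 1) / 2)
  have h2 := cpow_ne_pc ((1 : ℂ) / 2)
  generalize hX : (Real.pi : ℂ) ^ (-(2 * s + 1) / 2) = X at *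
  generalize hW : (Real.pi : ℂ) ^ ((1 : ℂ) / 2) = W at *
  generalize hG : Complex.Gamma s = G at *
  generalize hH : Complex.Gamma (s + 1 / 2) = H at *
  have h3 := pc_ne
  generalize hP : (Real.pi : ℂ) = P at *
  field_simp

private lemma r5 (s : ℂ) (hs : s ≠ 0) (hgs : Complex.Gamma s ≠ 0) :
    GammaC (s - 1 / 2) / GammaC (s + 1) =
      ((2 * Real.pi : ℝ) : ℂ) ^ ((3 : ℂ) / 2) *
        (Complex.Gamma (s - 1 / 2) / (s * Complex.Gamma s)) := by
  simp only [GammaC]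
  rw [Complex.Gamma_add_one s hs,
    show -(s - 1 / 2) = -(s + 1) + (3 : ℂ) / 2 by ring, Complex.cpow_add _ _ qc_ne]
  have h1 := cpow_ne_qc (-(s + 1))
  have h2 := cpow_ne_qc ((3 : ℂ) / 2)
  generalize hX : ((2 * Real.pi : ℝ) : ℂ) ^ (-(s + 1)) = X at *
  generalize hU : ((2 * Real.pi : ℝ) : ℂ) ^ ((3 : ℂ) / 2) = U at *
  generalize hG : Complex.Gamma s = G at *
  generalize hM : Complex.Gamma (s - 1 / 2) = M at *
  field_simp

private lemma r6 (s : ℂ) (hsh : s + 1 / 2 ≠ 0)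
    (hgh : Complex.Gamma (s + 1 / 2) ≠ 0) (hgm : Complex.Gamma (s - 1 / 2) ≠ 0) :
    (GammaR (2 * s) * GammaR (2 * s + 1)) / (GammaR (2 * s + 3) * GammaR (2 * s - 1)) =
      (Real.pi : ℂ) *
        (Complex.Gamma s /
          ((Real.pi : ℂ) ^ ((1 : ℂ) / 2) * ((s + 1 / 2) * Complex.Gamma (s - 1 / 2)))) := by
  simp only [GammaR]
  rw [show (2 * s) / 2 = s by ring, show (2 * s + 1) / 2 = s + 1 / 2 by ring,
    show (2 * s + 3) / 2 = (s + 1 / 2) + 1 by ring, Complex.Gamma_add_one _ hsh,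
    show (2 * s - 1) / 2 = s - 1 / 2 by ring,
    show -(2 * s + 3) / 2 = -(2 * s + 1) / 2 + (-1) by ring,
    Complex.cpow_add _ _ pc_ne, Complex.cpow_neg_one,
    show -(2 * s - 1) / 2 = -(2 * s) / 2 + (1 : ℂ) / 2 by ring,
    Complex.cpow_add _ _ pc_ne]
  have h1 := cpow_ne_pc (-(2 * s) / 2)
  have h2 := cpow_ne_pc (-(2 * s + 1) / 2)
  have h3 := cpow_ne_pc ((1 : ℂ) / 2)
  generalize hT : (Real.pi : ℂ) ^ (-(2 * s) / 2) = T at *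
  generalize hX : (Real.pi : ℂ) ^ (-(2 * s + 1) / 2) = X at *
  generalize hW : (Real.pi : ℂ) ^ ((1 : ℂ) / 2) = W at *
  generalize hG : Complex.Gamma s = G at *
  generalize hH : Complex.Gamma (s + 1 / 2) = H at *
  generalize hM : Complex.Gamma (s - 1 / 2) = M at *
  have h4 := pc_ne
  generalize hP : (Real.pi : ℂ) = P at *
  generalize hsh2 : s + 1 / 2 = y at *
  field_simp

private lemma r7 (s : ℂ) (hs : s ≠ 0) (hs1 : s + 1 ≠ 0) (hgs : Complex.Gamma s ≠ 0) :
    GammaC (s + 1 / 2) / GammaC (s + 2) =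
      ((2 * Real.pi : ℝ) : ℂ) ^ (3 : ℕ) * ((2 * Real.pi : ℝ) : ℂ) ^ (-((3 : ℂ) / 2)) *
        (Complex.Gamma (s + 1 / 2) / ((s + 1) * (s * Complex.Gamma s))) := by
  simp only [GammaC]
  rw [show s + 2 = (s + 1) + 1 by ring, Complex.Gamma_add_one (s + 1) hs1,
    Complex.Gamma_add_one s hs,
    show -(s + 1 / 2) = (-((s + 1) + 1) + ((3 : ℕ) : ℂ)) + (-((3 : ℂ) / 2)) by push_cast; ring,
    Complex.cpow_add _ _ qc_ne, Complex.cpow_add _ _ qc_ne, Complex.cpow_natCast]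
  have h1 := cpow_ne_qc (-((s + 1) + 1))
  have h2 := cpow_ne_qc (-((3 : ℂ) / 2))
  generalize hX : ((2 * Real.pi : ℝ) : ℂ) ^ (-((s + 1) + 1)) = X at *
  generalize hV : ((2 * Real.pi : ℝ) : ℂ) ^ (-((3 : ℂ) / 2)) = V at *
  generalize hG : Complex.Gamma s = G at *
  generalize hH : Complex.Gamma (s + 1 / 2) = H at *
  have h3 := qc_ne
  generalize hQ : ((2 * Real.pi : ℝ) : ℂ) = Q at *
  generalize hs1' : s + 1 = y at *
  field_simp

/-- As `λ → 0⁺` (λ real), the displayed product of Gamma factors tends to `−1`. -/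
theorem stmt5 :
    Filter.Tendsto
      (fun l : ℝ =>
        (-(1 / 2) : ℂ) *
          (GammaC ((l : ℂ) + 2) / GammaC ((l : ℂ) + 1)) *
          (GammaR ((l : ℂ) + 2) / GammaR (l : ℂ)) *
          (GammaC (2 * (l : ℂ) + 2) / GammaC (2 * (l : ℂ) + 1)) *
          (GammaR (2 * (l : ℂ) + 2) / GammaR (2 * (l : ℂ) + 1)) *
          (GammaC ((l : ℂ) - 1 / 2) / GammaC ((l : ℂ) + 1)) *
          ((GammaR (2 * (l : ℂ)) * GammaR (2 * (l : ℂ) + 1)) /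
            (GammaR (2 * (l : ℂ) + 3) * GammaR (2 * (l : ℂ) - 1))) *
          (GammaC ((l : ℂ) + 1 / 2) / GammaC ((l : ℂ) + 2)))
      (nhdsWithin 0 (Set.Ioi 0)) (nhds (-1)) := by
  have key : ∀ l : ℝ, l ∈ Set.Ioo (0 : ℝ) (1 / 2) →
      (-(1 / 2) : ℂ) *
          (GammaC ((l : ℂ) + 2) / GammaC ((l : ℂ) + 1)) *
          (GammaR ((l : ℂ) + 2) / GammaR (l : ℂ)) *
          (GammaC (2 * (l : ℂ) + 2) / GammaC (2 * (l : ℂ) + 1)) *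
          (GammaR (2 * (l : ℂ) + 2) / GammaR (2 * (l : ℂ) + 1)) *
          (GammaC ((l : ℂ) - 1 / 2) / GammaC ((l : ℂ) + 1)) *
          ((GammaR (2 * (l : ℂ)) * GammaR (2 * (l : ℂ) + 1)) /
            (GammaR (2 * (l : ℂ) + 3) * GammaR (2 * (l : ℂ) - 1))) *
          (GammaC ((l : ℂ) + 1 / 2) / GammaC ((l : ℂ) + 2)) = -1 := by
    intro l hl
    obtain ⟨hl0, hl2⟩ := hl
    have hs : (l : ℂ) ≠ 0 := Complex.ofReal_ne_zero.mpr hl0.ne'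
    have e1 : (l : ℂ) + 1 = ((l + 1 : ℝ) : ℂ) := by push_cast; ring
    have e2 : 2 * (l : ℂ) + 1 = ((2 * l + 1 : ℝ) : ℂ) := by push_cast; ring
    have eh : (l : ℂ) + 1 / 2 = ((l + 1 / 2 : ℝ) : ℂ) := by push_cast; ring
    have em : (l : ℂ) - 1 / 2 = ((l - 1 / 2 : ℝ) : ℂ) := by push_cast; ring
    have ed : (l : ℂ) / 2 = ((l / 2 : ℝ) : ℂ) := by push_cast; ring
    have hs1 : (l : ℂ) + 1 ≠ 0 := by
      rw [e1]; exact Complex.ofReal_ne_zero.mpr (by linarith)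
    have hsh : (l : ℂ) + 1 / 2 ≠ 0 := by
      rw [eh]; exact Complex.ofReal_ne_zero.mpr (by linarith)
    have h2s1 : 2 * (l : ℂ) + 1 ≠ 0 := by
      rw [e2]; exact Complex.ofReal_ne_zero.mpr (by linarith)
    have hsd : (l : ℂ) / 2 ≠ 0 := by
      rw [ed]; exact Complex.ofReal_ne_zero.mpr (by linarith)
    have hgs : Complex.Gamma (l : ℂ) ≠ 0 :=
      Complex.Gamma_ne_zero_of_re_pos (by simpa using hl0)
    have hgd : Complex.Gamma ((l : ℂ) / 2) ≠ 0 := by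
      rw [ed]; exact Complex.Gamma_ne_zero_of_re_pos (by simpa using (by linarith : (0:ℝ) < l / 2))
    have hg1 : Complex.Gamma ((l : ℂ) + 1) ≠ 0 := by
      rw [e1]; exact Complex.Gamma_ne_zero_of_re_pos (by simpa using (by linarith : (0:ℝ) < l + 1))
    have hg2s1 : Complex.Gamma (2 * (l : ℂ) + 1) ≠ 0 := by
      rw [e2]
      exact Complex.Gamma_ne_zero_of_re_pos (by simpa using (by linarith : (0:ℝ) < 2 * l + 1))
    have hgh : Complex.Gamma ((l : ℂ) + 1 / 2) ≠ 0 := by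
      rw [eh]
      exact Complex.Gamma_ne_zero_of_re_pos (by simpa using (by linarith : (0:ℝ) < l + 1 / 2))
    have hgm : Complex.Gamma ((l : ℂ) - 1 / 2) ≠ 0 := by
      apply Complex.Gamma_ne_zero
      intro m h
      rw [em, show -(m : ℂ) = ((-(m : ℝ) : ℝ) : ℂ) by push_cast; ring] at h
      have h' : l - 1 / 2 = -(m : ℝ) := Complex.ofReal_inj.mp h
      rcases Nat.eq_zero_or_pos m with hm | hm
      · rw [hm] at h'; norm_num at h'; linarith
      · have : (1 : ℝ) ≤ (m : ℝ) := by exact_mod_cast hm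
        linarith
    have h1 : GammaC ((l : ℂ) + 2) / GammaC ((l : ℂ) + 1) =
        ((l : ℂ) + 1) / ((2 * Real.pi : ℝ) : ℂ) := by
      have := rC ((l : ℂ) + 1) hs1 hg1
      rwa [show (l : ℂ) + 1 + 1 = (l : ℂ) + 2 by ring] at this
    have h3 : GammaC (2 * (l : ℂ) + 2) / GammaC (2 * (l : ℂ) + 1) =
        (2 * (l : ℂ) + 1) / ((2 * Real.pi : ℝ) : ℂ) := by
      have := rC (2 * (l : ℂ) + 1) h2s1 hg2s1
      rwa [show 2 * (l : ℂ) + 1 + 1 = 2 * (l : ℂ) + 2 by ring] at this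
    rw [h1, rR (l : ℂ) hsd hgd, h3, r4 (l : ℂ) hs hgh, r5 (l : ℂ) hs hgs,
      r6 (l : ℂ) hsh hgh hgm, r7 (l : ℂ) hs hs1 hgs]
    rw [Complex.cpow_neg ((2 * Real.pi : ℝ) : ℂ) ((3 : ℂ) / 2)]
    have h2 := cpow_ne_qc ((3 : ℂ) / 2)
    have h4 := cpow_ne_pc ((1 : ℂ) / 2)
    generalize hU : ((2 * Real.pi : ℝ) : ℂ) ^ ((3 : ℂ) / 2) = U at *
    generalize hW : (Real.pi : ℂ) ^ ((1 : ℂ) / 2) = W at *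
    generalize hG : Complex.Gamma (l : ℂ) = G at *
    generalize hH : Complex.Gamma ((l : ℂ) + 1 / 2) = H at *
    generalize hM : Complex.Gamma ((l : ℂ) - 1 / 2) = M at *
    have hq := qc_ne
    have hp := pc_ne
    rw [show ((2 * Real.pi : ℝ) : ℂ) = 2 * (Real.pi : ℂ) by push_cast; ring] at *
    generalize hP : (Real.pi : ℂ) = P at *
    generalize hz : (l : ℂ) = z at *
    generalize hy1 : z + 1 = y1 at *
    generalize hyh : z + 1 / 2 = yh at *
    rw [show 2 * z + 1 = 2 * yh by rw [← hyh]; ring]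
    field_simp
  have hev : (fun _ : ℝ => (-1 : ℂ)) =ᶠ[nhdsWithin (0:ℝ) (Set.Ioi 0)]
      (fun l : ℝ =>
        (-(1 / 2) : ℂ) *
          (GammaC ((l : ℂ) + 2) / GammaC ((l : ℂ) + 1)) *
          (GammaR ((l : ℂ) + 2) / GammaR (l : ℂ)) *
          (GammaC (2 * (l : ℂ) + 2) / GammaC (2 * (l : ℂ) + 1)) *
          (GammaR (2 * (l : ℂ) + 2) / GammaR (2 * (l : ℂ) + 1)) *
          (GammaC ((l : ℂ) - 1 / 2) / GammaC ((l : ℂ) + 1)) *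
          ((GammaR (2 * (l : ℂ)) * GammaR (2 * (l : ℂ) + 1)) /
            (GammaR (2 * (l : ℂ) + 3) * GammaR (2 * (l : ℂ) - 1))) *
          (GammaC ((l : ℂ) + 1 / 2) / GammaC ((l : ℂ) + 2))) := by
    filter_upwards [Ioo_mem_nhdsGT_of_mem (by norm_num : (0:ℝ) ∈ Set.Ico (0:ℝ) (1/2))]
      with l hl
    exact (key l hl).symm
  exact Filter.Tendsto.congr' hev tendsto_const_nhds
end

section
/- Let m ≥ 1 and let A ∈ Sp(2m, ℂ) be a symplectic matrix which is diagonalizable, i.e. there exists an invertible P ∈ M_{2m}(ℂ) such that P⁻¹·A·P is a diagonal matrix. Then there exist S ∈ Sp(2m, ℂ) and an invertible diagonal matrix D ∈ M_m(ℂ) such that S⁻¹·A·S is the block matrix with diagonal blocks D and D⁻¹ and zero off-diagonal blocks. (This is the classification, asserted in Section 1.1.3 of the paper, of semisimple elements of Sp(2m,ℂ) up to Sp(2m,ℂ)-conjugacy: every such element is conjugate within the symplectic group to a 'balanced' diagonal element.) -/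
set_option linter.unusedSectionVars false
open Matrix

namespace Stmt11Aux

variable {ι : Type*} [Fintype ι] [DecidableEq ι]

/-- Projection onto the `μ`-eigenspace coordinates. -/
noncomputable def proj (Λ : ι → ℂ) (μ : ℂ) (x : ι → ℂ) : ι → ℂ :=
  fun i => if Λ i = μ then x i else 0

/-- The bilinear form of `K`. -/
noncomputable def om (K : Matrix ι ι ℂ) (x y : ι → ℂ) : ℂ := x ⬝ᵥ (K *ᵥ y)

/-- `om` as a linear functional in the first argument. -/
noncomputable def omL (K : Matrix ι ι ℂ) (y : ι → ℂ) : (ι → ℂ) →ₗ[ℂ] ℂ where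
  toFun x := om K x y
  map_add' a b := by simp [om, add_dotProduct]
  map_smul' c a := by simp [om, smul_dotProduct]

@[simp] lemma omL_apply (K : Matrix ι ι ℂ) (y x : ι → ℂ) : omL K y x = om K x y := rfl

variable {Λ : ι → ℂ} {K : Matrix ι ι ℂ}

lemma om_skew (hskew : Kᵀ = -K) (x y : ι → ℂ) : om K y x = - om K x y := by
  unfold om
  rw [Matrix.dotProduct_mulVec x K y, ← Matrix.mulVec_transpose, hskew]
  simp [Matrix.neg_mulVec, dotProduct_comm]

lemma om_self (hskew : Kᵀ = -K) (x : ι → ℂ) : om K x x = 0 := by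
  have h := om_skew hskew x x
  linear_combination h / 2

lemma om_sub_left (x y z : ι → ℂ) : om K (x - y) z = om K x z - om K y z := by
  simp [om, sub_dotProduct]

lemma om_sub_right (x y z : ι → ℂ) : om K x (y - z) = om K x y - om K x z := by
  simp [om, Matrix.mulVec_sub, dotProduct_sub]

lemma om_add_right (x y z : ι → ℂ) : om K x (y + z) = om K x y + om K x z := by
  simp [om, Matrix.mulVec_add, dotProduct_add]

lemma om_smul_right (c : ℂ) (x y : ι → ℂ) : om K x (c • y) = c * om K x y := by
  simp [om, Matrix.mulVec_smul, dotProduct_smul, smul_eq_mul]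

lemma om_smul_left (c : ℂ) (x y : ι → ℂ) : om K (c • x) y = c * om K x y := by
  simp [om, smul_dotProduct, smul_eq_mul]

section supp

variable (hK : ∀ i j, K i j ≠ 0 → Λ i * Λ j = 1) {lam : ℂ} (hlam : lam ≠ 0)
  {v : ι → ℂ} (hv : ∀ i, Λ i ≠ lam → v i = 0)

include hK hlam hv

lemma mulVec_supp : ∀ i, Λ i ≠ lam⁻¹ → (K *ᵥ v) i = 0 := by
  intro i hi
  apply Finset.sum_eq_zero
  intro j _
  by_cases hvj : v j = 0
  · simp [hvj]
  by_cases hKij : K i j = 0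
  · simp [hKij]
  exfalso
  have hΛj : Λ j = lam := by by_contra h; exact hvj (hv j h)
  have := hK i j hKij
  rw [hΛj] at this
  exact hi (eq_inv_of_mul_eq_one_left this)

lemma vecMul_supp : ∀ j, Λ j ≠ lam⁻¹ → (v ᵥ* K) j = 0 := by
  intro j hj
  apply Finset.sum_eq_zero
  intro i _
  by_cases hvi : v i = 0
  · simp [hvi]
  by_cases hKij : K i j = 0
  · simp [hKij]
  exfalso
  have hΛi : Λ i = lam := by by_contra h; exact hvi (hv i h)
  have := hK i j hKij
  rw [hΛi] at this
  exact hj (eq_inv_of_mul_eq_one_right this)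

/-- If `z` vanishes on the `lam⁻¹` coordinates, it pairs to zero with `v`. -/
lemma om_left_vanish {z : ι → ℂ} (hz : ∀ i, Λ i = lam⁻¹ → z i = 0) : om K z v = 0 := by
  unfold om
  apply Finset.sum_eq_zero
  intro i _
  by_cases hi : Λ i = lam⁻¹
  · simp [hz i hi]
  · simp [mulVec_supp hK hlam hv i hi]

lemma om_right_vanish {z : ι → ℂ} (hz : ∀ j, Λ j = lam⁻¹ → z j = 0) : om K v z = 0 := by
  unfold om
  rw [Matrix.dotProduct_mulVec]
  apply Finset.sum_eq_zero
  intro j _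
  by_cases hj : Λ j = lam⁻¹
  · simp [hz j hj]
  · simp [vecMul_supp hK hlam hv j hj]

lemma om_proj_left_ne {μ : ℂ} (hμ : μ ≠ lam⁻¹) (x : ι → ℂ) :
    om K (proj Λ μ x) v = 0 := by
  apply om_left_vanish hK hlam hv
  intro i hi
  simp only [proj]
  rw [if_neg]
  intro h
  exact hμ (h.symm.trans hi)

lemma om_proj_left_eq (x : ι → ℂ) : om K (proj Λ lam⁻¹ x) v = om K x v := by
  have h : om K (x - proj Λ lam⁻¹ x) v = 0 := by
    apply om_left_vanish hK hlam hv
    intro i hi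
    simp [proj, hi]
  rw [om_sub_left] at h
  linear_combination -h

lemma om_proj_right_ne {μ : ℂ} (hμ : μ ≠ lam⁻¹) (x : ι → ℂ) :
    om K v (proj Λ μ x) = 0 := by
  apply om_right_vanish hK hlam hv
  intro i hi
  simp only [proj]
  rw [if_neg]
  intro h
  exact hμ (h.symm.trans hi)

lemma om_proj_right_eq (x : ι → ℂ) : om K v (proj Λ lam⁻¹ x) = om K v x := by
  have h : om K v (x - proj Λ lam⁻¹ x) = 0 := by
    apply om_right_vanish hK hlam hv
    intro i hi
    simp [proj, hi]
  rw [om_sub_right] at h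
  linear_combination -h

end supp



variable {ι : Type*} [Fintype ι] [DecidableEq ι]

theorem core (Λ : ι → ℂ) (K : Matrix ι ι ℂ) (hskew : Kᵀ = -K)
    (hK : ∀ i j, K i j ≠ 0 → Λ i * Λ j = 1) (hΛ : ∀ i, Λ i ≠ 0) :
    ∀ (r : ℕ) (W : Submodule ℂ (ι → ℂ)),
    (∀ x ∈ W, ∀ μ, proj Λ μ x ∈ W) →
    (∀ x ∈ W, (∀ y ∈ W, om K x y = 0) → x = 0) →
    Module.finrank ℂ W = 2 * r →
    ∃ (e f : Fin r → (ι → ℂ)) (d : Fin r → ℂ),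
      (∀ k, d k ≠ 0) ∧
      (∀ k i, Λ i ≠ d k → e k i = 0) ∧
      (∀ k i, Λ i ≠ (d k)⁻¹ → f k i = 0) ∧
      (∀ k l, om K (e k) (e l) = 0) ∧
      (∀ k l, om K (f k) (f l) = 0) ∧
      (∀ k l, om K (e k) (f l) = -(if k = l then 1 else 0)) ∧
      (∀ k, e k ∈ W) ∧ (∀ k, f k ∈ W) := by
  intro r
  induction r with
  | zero =>
    intro W _ _ _
    exact ⟨Fin.elim0, Fin.elim0, Fin.elim0, fun k => k.elim0, fun k => k.elim0,
      fun k => k.elim0, fun k => k.elim0, fun k => k.elim0, fun k => k.elim0,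
      fun k => k.elim0, fun k => k.elim0⟩
  | succ r ih =>
    intro W hproj hnd hrank
    -- W is nonzero
    have hWne : W ≠ ⊥ := by
      intro h
      rw [h, finrank_bot] at hrank
      omega
    obtain ⟨x, hxW, hxne⟩ := Submodule.exists_mem_ne_zero_of_ne_bot hWne
    obtain ⟨i₀, hi₀⟩ : ∃ i, x i ≠ 0 := by
      by_contra h
      push_neg at h
      exact hxne (funext h)
    set lam := Λ i₀ with hlamdef
    have hlam : lam ≠ 0 := hΛ i₀
    set v := proj Λ lam x with hvdef
    have hvW : v ∈ W := hproj x hxW lam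
    have hvsupp : ∀ i, Λ i ≠ lam → v i = 0 := by
      intro i hi; simp [hvdef, proj, hi]
    have hvne : v ≠ 0 := by
      intro h
      apply hi₀
      have := congrFun h i₀
      exact (by simpa [hvdef, proj] using this : Λ i₀ = lam → x i₀ = 0) rfl
    -- find a partner
    obtain ⟨w, hwW, hw⟩ : ∃ w ∈ W, om K v w ≠ 0 := by
      by_contra h
      push_neg at h
      exact hvne (hnd v hvW h)
    set c := om K v w with hcdef
    set f₁ := proj Λ lam⁻¹ w with hf₁def
    have hf₁W : f₁ ∈ W := hproj w hwW _
    have homvf₁ : om K v f₁ = c := om_proj_right_eq hK hlam hvsupp w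
    set f₀ : ι → ℂ := (-c⁻¹) • f₁ with hf₀def
    have hf₀W : f₀ ∈ W := W.smul_mem _ hf₁W
    have hf₀supp : ∀ i, Λ i ≠ lam⁻¹ → f₀ i = 0 := by
      intro i hi
      simp [hf₀def, hf₁def, proj, hi]
    have homvf₀ : om K v f₀ = -1 := by
      rw [hf₀def, om_smul_right, homvf₁]
      field_simp
    have homf₀v : om K f₀ v = 1 := by
      rw [om_skew hskew, homvf₀]; ring
    have homvv : om K v v = 0 := om_self hskew v
    have homff : om K f₀ f₀ = 0 := om_self hskew f₀
    clear hf₀def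
    clear_value f₀
    -- decomposition of W
    have hdecomp : ∀ y ∈ W, y - (-(om K y f₀)) • v - (om K y v) • f₀ ∈ W ⊓
        LinearMap.ker (omL K v) ⊓ LinearMap.ker (omL K f₀) := by
      intro y hyW
      refine ⟨⟨?_, ?_⟩, ?_⟩
      · exact W.sub_mem (W.sub_mem hyW (W.smul_mem _ hvW)) (W.smul_mem _ hf₀W)
      · show om K _ v = 0
        rw [om_sub_left, om_sub_left, om_smul_left, om_smul_left, homvv, homf₀v]
        ring
      · show om K _ f₀ = 0
        rw [om_sub_left, om_sub_left, om_smul_left, om_smul_left, homvf₀, homff]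
        ring
    set W' := W ⊓ LinearMap.ker (omL K v) ⊓ LinearMap.ker (omL K f₀) with hW'def
    have hW'le : W' ≤ W := le_trans inf_le_left inf_le_left
    -- linear independence of v, f₀
    have hindep : LinearIndependent ℂ ![v, f₀] := by
      rw [LinearIndependent.pair_iff]
      intro a b hab
      have h1 : om K v (a • v + b • f₀) = 0 := by rw [hab]; simp [om]
      rw [om_add_right, om_smul_right, om_smul_right, homvv, homvf₀] at h1
      have hb : b = 0 := by linear_combination -h1
      have h2 : om K f₀ (a • v + b • f₀) = 0 := by rw [hab]; simp [om]
      rw [om_add_right, om_smul_right, om_smul_right, homf₀v, homff] at h2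
      have ha : a = 0 := by linear_combination h2
      exact ⟨ha, hb⟩
    -- the span of v, f₀
    set T : Submodule ℂ (ι → ℂ) := Submodule.span ℂ {v, f₀} with hTdef
    have hTrank : Module.finrank ℂ T = 2 := by
      have : ({v, f₀} : Set (ι → ℂ)) = Set.range ![v, f₀] :=
        (Matrix.range_cons_cons_empty v f₀ ![]).symm
      rw [hTdef, this, finrank_span_eq_card hindep]
      simp
    have hTle : T ≤ W := by
      rw [hTdef, Submodule.span_le]
      intro z hz
      rcases hz with h | h
      · exact h ▸ hvW
      · exact h ▸ hf₀W
    have hsup : W' ⊔ T = W := by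
      apply le_antisymm (sup_le hW'le hTle)
      intro y hyW
      have h := hdecomp y hyW
      have : y = (y - (-(om K y f₀)) • v - (om K y v) • f₀) + ((-(om K y f₀)) • v + (om K y v) • f₀) := by ring_nf
      rw [this]
      apply Submodule.add_mem
      · exact Submodule.mem_sup_left h
      · apply Submodule.mem_sup_right
        apply Submodule.add_mem
        · exact Submodule.smul_mem _ _ (Submodule.subset_span (by simp))
        · exact Submodule.smul_mem _ _ (Submodule.subset_span (by simp))
    have hinf : W' ⊓ T = ⊥ := by
      rw [eq_bot_iff]
      rintro z ⟨hzW', hzT⟩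
      obtain ⟨a, b, hab⟩ := Submodule.mem_span_pair.mp hzT
      obtain ⟨⟨_, hz1⟩, hz2⟩ := hzW'
      replace hz1 : om K z v = 0 := hz1
      replace hz2 : om K z f₀ = 0 := hz2
      rw [← hab] at hz1 hz2
      have hab1 : om K (a • v + b • f₀) v = b := by
        have := om_skew hskew v (a • v + b • f₀)
        rw [om_add_right, om_smul_right, om_smul_right, homvv, homvf₀] at this
        linear_combination this
      have hab2 : om K (a • v + b • f₀) f₀ = -a := by
        have := om_skew hskew f₀ (a • v + b • f₀)
        rw [om_add_right, om_smul_right, om_smul_right, homf₀v, homff] at this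
        linear_combination this
      rw [hab1] at hz1
      rw [hab2] at hz2
      have ha : a = 0 := by linear_combination -hz2
      rw [← hab, hz1, ha]
      simp
    have hW'rank : Module.finrank ℂ W' = 2 * r := by
      have := Submodule.finrank_sup_add_finrank_inf_eq W' T
      rw [hsup, hinf, hrank, hTrank, finrank_bot] at this
      omega
    -- W' inherits the hypotheses
    have hW'proj : ∀ z ∈ W', ∀ μ, proj Λ μ z ∈ W' := by
      intro z hz μ
      obtain ⟨⟨hzW, hz1⟩, hz2⟩ := hz
      replace hz1 : om K z v = 0 := hz1
      replace hz2 : om K z f₀ = 0 := hz2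
      refine ⟨⟨hproj z hzW μ, ?_⟩, ?_⟩
      · show om K (proj Λ μ z) v = 0
        by_cases hμ : μ = lam⁻¹
        · rw [hμ, om_proj_left_eq hK hlam hvsupp, hz1]
        · exact om_proj_left_ne hK hlam hvsupp hμ z
      · show om K (proj Λ μ z) f₀ = 0
        by_cases hμ : μ = lam⁻¹⁻¹
        · rw [hμ, om_proj_left_eq hK (inv_ne_zero hlam) hf₀supp, hz2]
        · exact om_proj_left_ne hK (inv_ne_zero hlam) hf₀supp hμ z
    have hW'nd : ∀ z ∈ W', (∀ y ∈ W', om K z y = 0) → z = 0 := by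
      intro z hz H
      obtain ⟨⟨hzW, hz1⟩, hz2⟩ := hz
      replace hz1 : om K z v = 0 := hz1
      replace hz2 : om K z f₀ = 0 := hz2
      apply hnd z hzW
      intro y hyW
      have h0 := H _ (hdecomp y hyW)
      rw [om_sub_right, om_sub_right, om_smul_right, om_smul_right, hz1, hz2] at h0
      linear_combination h0
    obtain ⟨e', f', d', hd', he'supp, hf'supp, hee, hff, hef, he'W, hf'W⟩ :=
      ih W' hW'proj hW'nd hW'rank
    have he'v : ∀ k, om K (e' k) v = 0 := fun k => (he'W k).1.2
    have he'f : ∀ k, om K (e' k) f₀ = 0 := fun k => (he'W k).2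
    have hf'v : ∀ k, om K (f' k) v = 0 := fun k => (hf'W k).1.2
    have hf'f : ∀ k, om K (f' k) f₀ = 0 := fun k => (hf'W k).2
    refine ⟨Fin.cons v e', Fin.cons f₀ f', Fin.cons lam d', ?_, ?_, ?_, ?_, ?_, ?_, ?_, ?_⟩
    · intro k
      refine Fin.cases ?_ (fun k' => ?_) k
      · simpa using hlam
      · simpa using hd' k'
    · intro k
      refine Fin.cases ?_ (fun k' => ?_) k
      · simpa using hvsupp
      · simpa using he'supp k'
    · intro k
      refine Fin.cases ?_ (fun k' => ?_) k
      · simpa using hf₀supp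
      · simpa using hf'supp k'
    · intro k l
      refine Fin.cases ?_ (fun k' => ?_) k <;> refine Fin.cases ?_ (fun l' => ?_) l
      · simpa using homvv
      · rw [Fin.cons_zero, Fin.cons_succ, om_skew hskew, he'v l']; ring
      · simpa using he'v k'
      · simpa using hee k' l'
    · intro k l
      refine Fin.cases ?_ (fun k' => ?_) k <;> refine Fin.cases ?_ (fun l' => ?_) l
      · simpa using homff
      · rw [Fin.cons_zero, Fin.cons_succ, om_skew hskew, hf'f l']; ring
      · simpa using hf'f k'
      · simpa using hff k' l'
    · intro k l
      refine Fin.cases ?_ (fun k' => ?_) k <;> refine Fin.cases ?_ (fun l' => ?_) l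
      · simpa using homvf₀
      · rw [Fin.cons_zero, Fin.cons_succ, om_skew hskew, hf'v l']
        simp [(Fin.succ_ne_zero l').symm]
      · rw [Fin.cons_succ, Fin.cons_zero, he'f k']
        simp [Fin.succ_ne_zero k']
      · rw [Fin.cons_succ, Fin.cons_succ, hef k' l']
        simp [Fin.succ_inj]
    · intro k
      refine Fin.cases ?_ (fun k' => ?_) k
      · simpa using hvW
      · simpa using hW'le (he'W k')
    · intro k
      refine Fin.cases ?_ (fun k' => ?_) k
      · simpa using hf₀W
      · simpa using hW'le (hf'W k')

end Stmt11Aux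

open Stmt11Aux in
/-- Every diagonalizable element of `Sp(2m,ℂ)` is conjugate within
`Sp(2m,ℂ)` to a block-diagonal matrix with blocks `D` and `D⁻¹`, `D` diagonal invertible. -/
theorem stmt11 (m : ℕ) (hm : 1 ≤ m) (A : Matrix (Fin m ⊕ Fin m) (Fin m ⊕ Fin m) ℂ)
    (hA : A ∈ Matrix.symplecticGroup (Fin m) ℂ)
    (hdiag : ∃ P : Matrix (Fin m ⊕ Fin m) (Fin m ⊕ Fin m) ℂ, IsUnit P ∧ (P⁻¹ * A * P).IsDiag) :
    ∃ S ∈ Matrix.symplecticGroup (Fin m) ℂ, ∃ D : Matrix (Fin m) (Fin m) ℂ,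
      D.IsDiag ∧ IsUnit D ∧ S⁻¹ * A * S = Matrix.fromBlocks D 0 0 D⁻¹ := by
  obtain ⟨P, hP, hPD⟩ := hdiag
  have hPdet : IsUnit P.det := (Matrix.isUnit_iff_isUnit_det P).mp hP
  set Λ : (Fin m ⊕ Fin m) → ℂ := (P⁻¹ * A * P).diag with hΛdef
  have hPAP : P⁻¹ * A * P = Matrix.diagonal Λ := hPD.diagonal_diag.symm
  have hAdet : IsUnit A.det := SymplecticGroup.symplectic_det hA
  have hΛ : ∀ i, Λ i ≠ 0 := by
    have hdd : IsUnit (Matrix.diagonal Λ).det := by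
      rw [← hPAP]
      simp only [Matrix.det_mul, Matrix.det_nonsing_inv]
      exact ((isUnit_ringInverse.mpr hPdet).mul hAdet).mul hPdet
    rw [Matrix.det_diagonal, isUnit_iff_ne_zero, Finset.prod_ne_zero_iff] at hdd
    exact fun i => hdd i (Finset.mem_univ i)
  have hAP : A * P = P * Matrix.diagonal Λ := by
    rw [← hPAP, ← Matrix.mul_assoc, ← Matrix.mul_assoc, Matrix.mul_nonsing_inv _ hPdet,
      Matrix.one_mul]
  set K := Pᵀ * Matrix.J (Fin m) ℂ * P with hKdef
  have hKskew : Kᵀ = -K := by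
    rw [hKdef, Matrix.transpose_mul, Matrix.transpose_mul, Matrix.J_transpose,
      Matrix.transpose_transpose]
    simp [Matrix.mul_assoc, Matrix.mul_neg, Matrix.neg_mul]
  have hJA : Aᵀ * Matrix.J (Fin m) ℂ * A = Matrix.J (Fin m) ℂ := SymplecticGroup.mem_iff'.mp hA
  have hcompat : Matrix.diagonal Λ * K * Matrix.diagonal Λ = K := by
    have h2 : (A * P)ᵀ * Matrix.J (Fin m) ℂ * (A * P) = K := by
      rw [Matrix.transpose_mul]
      calc Pᵀ * Aᵀ * Matrix.J (Fin m) ℂ * (A * P)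
          = Pᵀ * (Aᵀ * Matrix.J (Fin m) ℂ * A) * P := by
            simp only [Matrix.mul_assoc]
        _ = K := by rw [hJA, hKdef]
    rw [hAP, Matrix.transpose_mul, Matrix.diagonal_transpose, hKdef] at h2
    rw [hKdef]
    simp only [Matrix.mul_assoc] at h2 ⊢
    exact h2
  have hKsupp : ∀ i j, K i j ≠ 0 → Λ i * Λ j = 1 := by
    intro i j hij
    have h3 := congrFun (congrFun hcompat i) j
    rw [Matrix.mul_diagonal, Matrix.diagonal_mul] at h3
    exact mul_right_cancel₀ hij (by linear_combination h3)
  have hKdet : IsUnit K.det := by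
    rw [hKdef]
    simp only [Matrix.det_mul, Matrix.det_transpose]
    exact (hPdet.mul (Matrix.isUnit_det_J (Fin m) ℂ)).mul hPdet
  have hnd : ∀ x ∈ (⊤ : Submodule ℂ ((Fin m ⊕ Fin m) → ℂ)),
      (∀ y ∈ (⊤ : Submodule ℂ ((Fin m ⊕ Fin m) → ℂ)), om K x y = 0) → x = 0 := by
    intro x _ H
    have hv : x ᵥ* K = 0 := by
      funext j
      have h4 := H (Pi.single j 1) Submodule.mem_top
      rw [om, Matrix.dotProduct_mulVec] at h4
      simpa [dotProduct_single] using h4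
    have h5 := congrArg (fun w => w ᵥ* K⁻¹) hv
    simpa [Matrix.vecMul_vecMul, Matrix.mul_nonsing_inv _ hKdet] using h5
  have hrank : Module.finrank ℂ (⊤ : Submodule ℂ ((Fin m ⊕ Fin m) → ℂ)) = 2 * m := by
    rw [finrank_top, Module.finrank_pi, Fintype.card_sum, Fintype.card_fin]
    omega
  obtain ⟨e, f, d, hd, hesupp, hfsupp, hee, hff, hef, -, -⟩ :=
    core Λ K hKskew hKsupp hΛ m ⊤ (fun x _ μ => Submodule.mem_top) hnd hrank
  set R : Matrix (Fin m ⊕ Fin m) (Fin m ⊕ Fin m) ℂ :=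
    Matrix.of (fun i q => Sum.elim (fun k => e k i) (fun k => f k i) q) with hRdef
  have key : ∀ a b, (Rᵀ * K * R) a b = om K (fun i => R i a) (fun i => R i b) := by
    intro a b
    rw [Matrix.mul_assoc]
    simp only [Matrix.mul_apply, Matrix.transpose_apply, om, dotProduct, Matrix.mulVec]
  have hRKR : Rᵀ * K * R = Matrix.J (Fin m) ℂ := by
    ext a b
    rcases a with a | a <;> rcases b with b | b <;> rw [key]
    · show om K (e a) (e b) = Matrix.J (Fin m) ℂ (Sum.inl a) (Sum.inl b)
      rw [hee]
      simp [Matrix.J, Matrix.fromBlocks]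
    · show om K (e a) (f b) = Matrix.J (Fin m) ℂ (Sum.inl a) (Sum.inr b)
      rw [hef]
      simp [Matrix.J, Matrix.fromBlocks, Matrix.one_apply]
    · show om K (f a) (e b) = Matrix.J (Fin m) ℂ (Sum.inr a) (Sum.inl b)
      rw [om_skew hKskew, hef]
      simp [Matrix.J, Matrix.fromBlocks, Matrix.one_apply, eq_comm]
    · show om K (f a) (f b) = Matrix.J (Fin m) ℂ (Sum.inr a) (Sum.inr b)
      rw [hff]
      simp [Matrix.J, Matrix.fromBlocks]
  have hRdet : IsUnit R.det := by
    have h6 := congrArg Matrix.det hRKR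
    rw [Matrix.det_mul, Matrix.det_mul, Matrix.det_transpose] at h6
    have hJ := Matrix.isUnit_det_J (Fin m) ℂ
    rw [← h6] at hJ
    exact isUnit_of_mul_isUnit_right hJ
  have hRTdet : IsUnit Rᵀ.det := by rw [Matrix.det_transpose]; exact hRdet
  have hKR : K * R = Rᵀ⁻¹ * Matrix.J (Fin m) ℂ := by
    have h7 := congrArg (fun M => Rᵀ⁻¹ * M) hRKR
    simp only [← Matrix.mul_assoc] at h7
    rw [Matrix.nonsing_inv_mul _ hRTdet, Matrix.one_mul] at h7
    exact h7
  have hKinvRJ : K⁻¹ = R * (-(Matrix.J (Fin m) ℂ)) * Rᵀ := by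
    refine Matrix.inv_eq_right_inv ?_
    rw [← Matrix.mul_assoc, ← Matrix.mul_assoc, hKR]
    rw [Matrix.mul_neg, Matrix.mul_assoc (Rᵀ⁻¹), Matrix.J_squared]
    simp [Matrix.nonsing_inv_mul _ hRTdet]
  have hRJR : R * Matrix.J (Fin m) ℂ * Rᵀ = -K⁻¹ := by
    rw [hKinvRJ]
    simp [Matrix.mul_neg, Matrix.neg_mul]
  have hKinvP : K⁻¹ = P⁻¹ * (-(Matrix.J (Fin m) ℂ)) * Pᵀ⁻¹ := by
    rw [hKdef, Matrix.mul_inv_rev, Matrix.mul_inv_rev, Matrix.J_inv]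
    simp only [Matrix.mul_assoc, Matrix.transpose_nonsing_inv, Matrix.mul_neg, Matrix.neg_mul]
  have hPTdet : IsUnit Pᵀ.det := by rw [Matrix.det_transpose]; exact hPdet
  have hSmem : P * R ∈ Matrix.symplecticGroup (Fin m) ℂ := by
    rw [SymplecticGroup.mem_iff, Matrix.transpose_mul]
    calc P * R * Matrix.J (Fin m) ℂ * (Rᵀ * Pᵀ)
        = P * (R * Matrix.J (Fin m) ℂ * Rᵀ) * Pᵀ := by simp only [Matrix.mul_assoc]
      _ = P * (-K⁻¹) * Pᵀ := by rw [hRJR]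
      _ = P * (P⁻¹ * Matrix.J (Fin m) ℂ * Pᵀ⁻¹) * Pᵀ := by
          rw [hKinvP]; simp [Matrix.mul_neg, Matrix.neg_mul]
      _ = Matrix.J (Fin m) ℂ := by
          simp only [Matrix.mul_assoc]
          rw [Matrix.nonsing_inv_mul _ hPTdet, Matrix.mul_one,
            Matrix.mul_nonsing_inv_cancel_left _ _ hPdet]
  have hcomm : Matrix.diagonal Λ * R
      = R * Matrix.fromBlocks (Matrix.diagonal d) 0 0 (Matrix.diagonal fun k => (d k)⁻¹) := by
    rw [Matrix.fromBlocks_diagonal]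
    ext i q
    rw [Matrix.diagonal_mul, Matrix.mul_diagonal]
    rcases q with k | k
    · show Λ i * e k i = e k i * d k
      by_cases h : Λ i = d k
      · rw [h]; ring
      · rw [hesupp k i h]; ring
    · show Λ i * f k i = f k i * (d k)⁻¹
      by_cases h : Λ i = (d k)⁻¹
      · rw [h]; ring
      · rw [hfsupp k i h]; ring
  have hDinv : (Matrix.diagonal d)⁻¹ = Matrix.diagonal (fun k => (d k)⁻¹) := by
    refine Matrix.inv_eq_right_inv ?_
    rw [Matrix.diagonal_mul_diagonal,
      show (fun k => d k * (d k)⁻¹) = fun _ => (1 : ℂ) from funext fun k => mul_inv_cancel₀ (hd k),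
      Matrix.diagonal_one]
  have hDunit : IsUnit (Matrix.diagonal d) := by
    rw [Matrix.isUnit_iff_isUnit_det, Matrix.det_diagonal, isUnit_iff_ne_zero,
      Finset.prod_ne_zero_iff]
    exact fun k _ => hd k
  refine ⟨P * R, hSmem, Matrix.diagonal d, Matrix.isDiag_diagonal d, hDunit, ?_⟩
  rw [hDinv, Matrix.mul_inv_rev]
  calc R⁻¹ * P⁻¹ * A * (P * R) = R⁻¹ * ((P⁻¹ * A * P) * R) := by simp only [Matrix.mul_assoc]
    _ = R⁻¹ * (R * Matrix.fromBlocks (Matrix.diagonal d) 0 0 (Matrix.diagonal fun k => (d k)⁻¹)) := by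
        rw [hPAP, ← hcomm]
    _ = Matrix.fromBlocks (Matrix.diagonal d) 0 0 (Matrix.diagonal fun k => (d k)⁻¹) := by
        rw [Matrix.nonsing_inv_mul_cancel_left _ _ hRdet]
end

section
/- Let K be a number field and let v be a nonzero prime ideal of the ring of integers 𝓞_K of K (equivalently, a finite place of K). Then there exists a nonzero element α ∈ K such that: (i) α is not a square in K; (ii) φ(α) > 0 for every ring homomorphism φ : K → ℝ (i.e. α is totally positive); and (iii) the image of α in the v-adic completion K_v of K is a square in K_v. (This is the key existence claim in the proof of Lemma 4.1.1 of the paper, used to produce a totally real quadratic extension in which the place splits.) -/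
open IsDedekindDomain HeightOneSpectrum Multiplicative WithZero NumberField
open scoped NNReal


theorem ultra_norm_add_eq {L : Type*} [NormedField L]
    (hna : ∀ a b : L, ‖a + b‖ ≤ max ‖a‖ ‖b‖) {a b : L} (h : ‖b‖ < ‖a‖) :
    ‖a + b‖ = ‖a‖ := by
  refine le_antisymm ((hna a b).trans (by rw [max_eq_left h.le])) ?_
  have h2 : ‖a‖ ≤ max ‖a + b‖ ‖b‖ := by
    have := hna (a + b) (-b); simpa using this
  rcases max_cases ‖a + b‖ ‖b‖ with ⟨he, _⟩ | ⟨he, _⟩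
  · simpa [he] using h2
  · exact absurd (h2.trans_lt (by rwa [he])) (lt_irrefl _)

theorem exists_sq_of_norm_sub_one_lt {L : Type*} [NormedField L] [CompleteSpace L]
    (hna : ∀ a b : L, ‖a + b‖ ≤ max ‖a‖ ‖b‖) {x : L}
    (hx : ‖x - 1‖ < ‖(4 : L)‖) : ∃ γ : L, γ ^ 2 = x := by
  have h4 : (0:ℝ) < ‖(4:L)‖ := lt_of_le_of_lt (norm_nonneg _) hx
  have h4ne : (4 : L) ≠ 0 := by
    intro h; rw [h, norm_zero] at h4; exact lt_irrefl _ h4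
  have h2ne : (2 : L) ≠ 0 := by
    intro h; apply h4ne; rw [show (4:L) = 2*2 by norm_num, h, mul_zero]
  have h2pos : (0:ℝ) < ‖(2:L)‖ := norm_pos_iff.mpr h2ne
  have h42 : ‖(4:L)‖ = ‖(2:L)‖ * ‖(2:L)‖ := by
    rw [show (4:L) = 2*2 by norm_num, norm_mul]
  have h2le : ‖(2:L)‖ ≤ 1 := by
    have := hna 1 1
    simpa [show (1:L)+1 = 2 by norm_num] using this
  set r : ℝ := ‖x - 1‖ / ‖(4:L)‖ with hrdef
  have hr0 : 0 ≤ r := div_nonneg (norm_nonneg _) h4.le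
  have hr1 : r < 1 := (div_lt_one h4).mpr hx
  have hrx : ‖x - 1‖ = ‖(4:L)‖ * r := by
    rw [hrdef, mul_div_cancel₀ _ h4.ne']
  -- the Newton iteration sequence
  let c : ℕ → L := fun n => Nat.rec (1 : L) (fun _ cn => (cn + x / cn) / 2) n
  have hc0 : c 0 = 1 := rfl
  have hcs : ∀ n, c (n+1) = (c n + x / c n) / 2 := fun n => rfl
  have hpow_le : ∀ n : ℕ, r ^ (2 ^ n) ≤ r ^ n :=
    fun n => pow_le_pow_of_le_one hr0 hr1.le (Nat.le_of_lt (Nat.lt_two_pow_self (n := n)))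
  have hpow_lt1 : ∀ n : ℕ, r ^ (2 ^ n) ≤ r := fun n => by
    simpa using pow_le_pow_of_le_one hr0 hr1.le (Nat.one_le_two_pow (n := n))
  have key : ∀ n, ‖c n‖ = 1 ∧ ‖c n ^ 2 - x‖ ≤ ‖(4:L)‖ * r ^ (2 ^ n) := by
    intro n; induction n with
    | zero =>
      refine ⟨by simp [hc0], ?_⟩
      rw [hc0, one_pow, norm_sub_rev, hrx, pow_zero, pow_one]
    | succ n ih =>
      obtain ⟨hn1, he⟩ := ih
      have hcne : c n ≠ 0 := by
        intro h; rw [h, norm_zero] at hn1; exact one_ne_zero hn1.symm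
      set d : L := (x - c n ^ 2) / (2 * c n) with hd
      have id1 : c (n+1) = c n + d := by
        rw [hcs, hd]; field_simp; ring
      have hdn : ‖d‖ = ‖c n ^ 2 - x‖ / ‖(2:L)‖ := by
        rw [hd, norm_div, norm_mul, hn1, mul_one, norm_sub_rev]
      have hdb : ‖d‖ ≤ ‖(2:L)‖ * r ^ (2 ^ n) := by
        rw [hdn, div_le_iff₀ h2pos]
        calc ‖c n ^ 2 - x‖ ≤ ‖(4:L)‖ * r ^ (2^n) := he
          _ = ‖(2:L)‖ * r ^ (2^n) * ‖(2:L)‖ := by rw [h42]; ring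
      have hdlt : ‖d‖ < 1 := by
        calc ‖d‖ ≤ ‖(2:L)‖ * r ^ (2^n) := hdb
          _ ≤ 1 * r := by
            apply mul_le_mul h2le (hpow_lt1 n) (pow_nonneg hr0 _) zero_le_one
          _ < 1 := by rw [one_mul]; exact hr1
      have hnorm1 : ‖c (n+1)‖ = 1 := by
        rw [id1, ultra_norm_add_eq hna (by rw [hn1]; exact hdlt), hn1]
      refine ⟨hnorm1, ?_⟩
      have id2 : c (n+1) ^ 2 - x = (c n ^ 2 - x) ^ 2 / (2 * c n) ^ 2 := by
        rw [hcs]; field_simp; ring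
      rw [id2, norm_div, norm_pow, norm_pow, norm_mul, hn1, mul_one]
      have h2sq : ‖(2:L)‖ ^ 2 = ‖(4:L)‖ := by rw [h42, sq]
      rw [h2sq, div_le_iff₀ h4]
      calc ‖c n ^ 2 - x‖ ^ 2 ≤ (‖(4:L)‖ * r ^ (2^n)) ^ 2 := by
            apply pow_le_pow_left₀ (norm_nonneg _) he
        _ = ‖(4:L)‖ * r ^ (2 ^ (n+1)) * ‖(4:L)‖ := by
            rw [mul_pow, ← pow_mul, ← pow_succ]; ring
  have hcauchy : CauchySeq c := by
    apply cauchySeq_of_le_geometric r ‖(2:L)‖ hr1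
    intro n
    obtain ⟨hn1, he⟩ := key n
    have hcne : c n ≠ 0 := by
      intro h; rw [h, norm_zero] at hn1; exact one_ne_zero hn1.symm
    have id1 : c (n+1) - c n = (x - c n ^ 2) / (2 * c n) := by
      rw [hcs]; field_simp; ring
    rw [dist_eq_norm, norm_sub_rev, id1, norm_div, norm_mul, hn1, mul_one, norm_sub_rev,
      div_le_iff₀ h2pos]
    calc ‖c n ^ 2 - x‖ ≤ ‖(4:L)‖ * r ^ (2^n) := he
      _ ≤ ‖(2:L)‖ * r ^ n * ‖(2:L)‖ := by
          rw [h42]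
          have : r ^ (2^n) ≤ r ^ n := hpow_le n
          calc ‖(2:L)‖ * ‖(2:L)‖ * r ^ (2^n) ≤ ‖(2:L)‖ * ‖(2:L)‖ * r ^ n := by
                apply mul_le_mul_of_nonneg_left this (by positivity)
            _ = ‖(2:L)‖ * r ^ n * ‖(2:L)‖ := by ring
  obtain ⟨γ, hγ⟩ := cauchySeq_tendsto_of_complete hcauchy
  refine ⟨γ, ?_⟩
  have h1 : Filter.Tendsto (fun n => c n ^ 2) Filter.atTop (nhds (γ ^ 2)) := hγ.pow 2
  have h2 : Filter.Tendsto (fun n => c n ^ 2) Filter.atTop (nhds x) := by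
    rw [tendsto_iff_norm_sub_tendsto_zero]
    apply squeeze_zero (fun n => norm_nonneg _) (fun n => (key n).2.trans ?_)
    · have : Filter.Tendsto (fun n : ℕ => ‖(4:L)‖ * r ^ n) Filter.atTop (nhds (‖(4:L)‖ * 0)) :=
        (tendsto_pow_atTop_nhds_zero_of_lt_one hr0 hr1).const_mul _
      simpa using this
    · exact mul_le_mul_of_nonneg_left (hpow_le _) h4.le
  exact tendsto_nhds_unique h1 h2

theorem adic_sq (K : Type*) [Field K] [NumberField K]
    (v : IsDedekindDomain.HeightOneSpectrum (NumberField.RingOfIntegers K))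
    {x : v.adicCompletion K}
    (hx : Valued.v (x - 1) < Valued.v (4 : v.adicCompletion K)) :
    ∃ γ : v.adicCompletion K, γ ^ 2 = x := by
  haveI : Valuation.RankOne (Valued.v : Valuation (v.adicCompletion K) ℤᵐ⁰) := inferInstance
  letI : NormedField (v.adicCompletion K) := Valued.toNormedField (v.adicCompletion K) ℤᵐ⁰
  haveI : CompleteSpace (v.adicCompletion K) :=
    inferInstance
  have hna : ∀ a b : v.adicCompletion K, ‖a + b‖ ≤ max ‖a‖ ‖b‖ := fun a b =>
    Valuation.norm_add_le _ a b
  refine exists_sq_of_norm_sub_one_lt hna (x := x) ?_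
  have : ‖x - 1‖ < ‖(4 : v.adicCompletion K)‖ := by
    rw [Valued.toNormedField.norm_def, Valued.toNormedField.norm_def]
    exact_mod_cast (Valuation.RankOne.strictMono
      (Valued.v : Valuation (v.adicCompletion K) ℤᵐ⁰)) ((Valuation.restrict_lt_iff _).mpr hx)
  exact this

theorem no_sq_neg_one : ¬ ∃ z : ℤᵐ⁰, z ^ 2 = ((ofAdd (-1 : ℤ) : Multiplicative ℤ) : ℤᵐ⁰) := by
  rintro ⟨z, hz⟩
  rcases eq_or_ne z 0 with rfl | h0
  · rw [zero_pow (by norm_num)] at hz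
    exact WithZero.coe_ne_zero (a := (ofAdd (-1:ℤ) : Multiplicative ℤ)) hz.symm
  · obtain ⟨u, rfl⟩ := WithZero.ne_zero_iff_exists.mp h0
    rw [← WithZero.coe_pow, WithZero.coe_inj] at hz
    have := congrArg Multiplicative.toAdd hz
    rw [toAdd_pow, toAdd_ofAdd, nsmul_eq_mul] at this
    push_cast at this
    omega

set_option synthInstance.maxHeartbeats 1000000 in
/-- For a number field `K` and a finite place `v` of `K`, there is a
nonzero `α ∈ K` which is not a square in `K`, is totally positive, and becomes a square in
the `v`-adic completion `K_v`. -/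
theorem stmt13 (K : Type*) [Field K] [NumberField K]
    (v : IsDedekindDomain.HeightOneSpectrum (NumberField.RingOfIntegers K)) :
    ∃ α : K, α ≠ 0 ∧ (¬ ∃ β : K, β ^ 2 = α) ∧ (∀ φ : K →+* ℝ, 0 < φ α) ∧
      ∃ γ : v.adicCompletion K, γ ^ 2 = algebraMap K (v.adicCompletion K) α := by
  classical
  set R := NumberField.RingOfIntegers K with hRdef
  -- an auxiliary prime `w ≠ v`
  set n := Ideal.absNorm v.asIdeal with hn
  have hn0 : n ≠ 0 := by
    rw [hn, ne_eq, Ideal.absNorm_eq_zero_iff]; exact v.ne_bot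
  obtain ⟨q, hqn, hq⟩ := Nat.exists_infinite_primes (n + 1)
  have hqnotv : (q : R) ∉ v.asIdeal := by
    intro hq'
    have hcop : Nat.Coprime q n := (Nat.Prime.coprime_iff_not_dvd hq).mpr
      (fun hdvd => by have := Nat.le_of_dvd (Nat.pos_of_ne_zero hn0) hdvd; omega)
    obtain ⟨a, b, hab⟩ := Nat.isCoprime_iff_coprime.mpr hcop
    have h1 : (1 : R) ∈ v.asIdeal := by
      have := congrArg (fun z : ℤ => (z : R)) hab
      rw [Int.cast_add, Int.cast_mul, Int.cast_mul, Int.cast_natCast, Int.cast_natCast,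
        Int.cast_one] at this
      rw [← this]
      exact Ideal.add_mem _ (Ideal.mul_mem_left _ _ hq')
        (Ideal.mul_mem_left _ _ (Ideal.absNorm_mem _))
    exact v.isPrime.ne_top (Ideal.eq_top_iff_one _ |>.mpr h1)
  have hq0R : (q : R) ≠ 0 := Nat.cast_ne_zero.mpr hq.pos.ne'
  have hspan : Ideal.span {(q : R)} ≠ ⊤ := by
    intro htop
    have h1 : Ideal.absNorm (Ideal.span {(q : R)}) = 1 := by
      rw [htop, Ideal.absNorm_top]
    rw [Ideal.absNorm_span_singleton] at h1
    have hcast : (q : R) = algebraMap ℤ R (q : ℤ) := by push_cast; rfl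
    rw [hcast, Algebra.norm_algebraMap_of_basis (RingOfIntegers.basis K)] at h1
    haveI : Nonempty (Module.Free.ChooseBasisIndex ℤ (𝓞 K)) :=
      (RingOfIntegers.basis K).index_nonempty
    rw [Int.natAbs_pow] at h1
    have : q ^ Fintype.card (Module.Free.ChooseBasisIndex ℤ (𝓞 K)) = 1 := by
      simpa using h1
    have hc : 0 < Fintype.card (Module.Free.ChooseBasisIndex ℤ (𝓞 K)) :=
      Fintype.card_pos
    have h2 : 1 < q ^ Fintype.card (Module.Free.ChooseBasisIndex ℤ (𝓞 K)) :=
      Nat.one_lt_pow hc.ne' hq.one_lt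
    omega
  obtain ⟨w₀, hw₀max, hw₀le⟩ := Ideal.exists_le_maximal _ hspan
  have hqw : (q : R) ∈ w₀ := hw₀le (Ideal.mem_span_singleton_self _)
  set w : IsDedekindDomain.HeightOneSpectrum R :=
    ⟨w₀, hw₀max.isPrime, fun h => hq0R (by rw [h] at hqw; exact hqw)⟩ with hwdef
  have hwv : w.asIdeal ≠ v.asIdeal := fun h => hqnotv (h ▸ hqw)
  -- a uniformizer at w
  obtain ⟨π, hπ⟩ := w.intValuation_exists_uniformizer
  -- choice of N
  have h4R : (4 : R) ≠ 0 := by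
    intro h
    have := congrArg (algebraMap R K) h
    rw [map_ofNat, map_zero] at this
    norm_num at this
  have hξ0 : v.intValuationDef (4 : R) ≠ 0 := v.intValuation_ne_zero _ h4R
  -- choose N with ofAdd(-N) < intValuation 4
  obtain ⟨u, hu⟩ := WithZero.ne_zero_iff_exists.mp hξ0
  set N : ℕ := (-(Multiplicative.toAdd u)).toNat + 1 with hNdef
  have hN : ((ofAdd (-(N:ℤ)) : Multiplicative ℤ) : ℤᵐ⁰) < v.intValuationDef (4 : R) := by
    rw [← hu, WithZero.coe_lt_coe, ← ofAdd_toAdd u, Multiplicative.ofAdd_lt]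
    have := Int.self_le_toNat (-(Multiplicative.toAdd u))
    omega
  -- CRT
  have hsup : v.asIdeal ^ N ⊔ w.asIdeal ^ 2 = ⊤ := by
    apply Ideal.isCoprime_iff_sup_eq.mp
    exact (Ideal.isCoprime_iff_sup_eq.mpr
      (Ideal.IsMaximal.coprime_of_ne (HeightOneSpectrum.isMaximal v) hw₀max (Ne.symm hwv))).pow
  obtain ⟨i, hi, j, hj, hij⟩ := Submodule.mem_sup.mp (hsup ▸ Submodule.mem_top (x := (1:R)))
  set x₀ : R := j + π * i with hx₀
  have hx1 : x₀ - 1 ∈ v.asIdeal ^ N := by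
    have hxe : x₀ - 1 = (π - 1) * i := by rw [hx₀]; linear_combination hij
    rw [hxe]; exact Ideal.mul_mem_left _ _ hi
  have hx2 : x₀ - π ∈ w.asIdeal ^ 2 := by
    have hxe : x₀ - π = (1 - π) * j := by rw [hx₀]; linear_combination π * hij
    rw [hxe]; exact Ideal.mul_mem_left _ _ hj
  -- a positive integer in both ideals
  set t : ℕ := Ideal.absNorm (v.asIdeal ^ N) * Ideal.absNorm (w.asIdeal ^ 2) with htdef
  have htv : (t : R) ∈ v.asIdeal ^ N := by
    rw [htdef]; push_cast; erw [Nat.cast_mul]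
    exact Ideal.mul_mem_right _ _ (Ideal.absNorm_mem _)
  have htw : (t : R) ∈ w.asIdeal ^ 2 := by
    rw [htdef]; push_cast
    exact Ideal.mul_mem_left _ _ (Ideal.absNorm_mem _)
  have hvN_ne : v.asIdeal ^ N ≠ ⊥ := by
    intro h
    have hmem := Ideal.pow_mem_pow (Ideal.absNorm_mem v.asIdeal) N
    rw [h, Ideal.mem_bot] at hmem
    exact (pow_ne_zero N (Nat.cast_ne_zero.mpr hn0)) hmem
  have hw2_ne : w.asIdeal ^ 2 ≠ ⊥ := by
    intro h
    have hmem := Ideal.pow_mem_pow hqw 2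
    rw [h, Ideal.mem_bot] at hmem
    exact (pow_ne_zero 2 hq0R) hmem
  have ht0 : t ≠ 0 := by
    rw [htdef]
    apply Nat.mul_ne_zero <;> rw [ne_eq, Ideal.absNorm_eq_zero_iff]
    · exact hvN_ne
    · exact hw2_ne
  -- choose the shift m to get total positivity
  set xb : K := algebraMap R K x₀ with hxb
  have hbdd : BddAbove (Set.range fun φ : K →+* ℝ => -(φ xb)) := (Set.finite_range _).bddAbove
  obtain ⟨M, hM⟩ := hbdd
  have htR : (0:ℝ) < (t:ℝ) := by exact_mod_cast Nat.pos_of_ne_zero ht0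
  obtain ⟨m, hm⟩ := exists_nat_gt (M / (t:ℝ))
  have hmt : M < (m:ℝ) * (t:ℝ) := (div_lt_iff₀ htR).mp hm
  set α₀ : R := x₀ + ((m * t : ℕ) : R) with hα₀
  -- the w-adic valuation of α₀ is exactly ofAdd (-1)
  have hmtw : ((m * t : ℕ) : R) ∈ w.asIdeal ^ 2 := by
    push_cast; erw [Nat.cast_mul]; exact Ideal.mul_mem_left _ _ htw
  have hαπ : α₀ - π ∈ w.asIdeal ^ 2 := by
    have hxe : α₀ - π = (x₀ - π) + ((m * t : ℕ) : R) := by rw [hα₀]; ring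
    rw [hxe]; exact Ideal.add_mem _ hx2 hmtw
  have hδ : w.intValuationDef (α₀ - π) ≤ ((ofAdd (-(2:ℤ)) : Multiplicative ℤ) : ℤᵐ⁰) := by
    have hh := (w.intValuation_le_pow_iff_dvd (α₀ - π) 2).mpr (Ideal.dvd_span_singleton.mpr hαπ)
    exact_mod_cast hh
  have h21 : ((ofAdd (-(2:ℤ)) : Multiplicative ℤ) : ℤᵐ⁰)
      < ((ofAdd (-1:ℤ) : Multiplicative ℤ) : ℤᵐ⁰) := by
    rw [WithZero.coe_lt_coe, Multiplicative.ofAdd_lt]; norm_num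
  have hwα : w.intValuationDef α₀ = ((ofAdd (-1:ℤ) : Multiplicative ℤ) : ℤᵐ⁰) := by
    have hlt : w.intValuation (α₀ - π) < w.intValuation π := by
      rw [hπ]; exact lt_of_le_of_lt hδ h21
    have hthis := Valuation.map_add_eq_of_lt_left w.intValuation (x := π) (y := α₀ - π) hlt
    have heq : π + (α₀ - π) = α₀ := by ring
    rw [heq] at hthis
    rw [show w.intValuationDef α₀ = w.intValuation α₀ from rfl, hthis]
    exact hπ
  have hα₀ne : α₀ ≠ 0 := by
    intro h
    rw [h] at hwα
    rw [show w.intValuationDef (0:R) = 0 from Valuation.map_zero w.intValuation] at hwα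
    exact WithZero.coe_ne_zero hwα.symm
  refine ⟨algebraMap R K α₀, ?_, ?_, ?_, ?_⟩
  · -- nonzero
    exact fun h => hα₀ne ((map_eq_zero_iff _ (IsFractionRing.injective R K)).mp h)
  · -- not a square in K
    rintro ⟨β, hβ⟩
    apply no_sq_neg_one
    refine ⟨w.valuation K β, ?_⟩
    rw [← map_pow, hβ, valuation_of_algebraMap]
    exact hwα
  · -- totally positive
    intro φ
    have hcast : algebraMap R K α₀ = xb + ((m * t : ℕ) : K) := by
      rw [hα₀, map_add, hxb, map_natCast]
    rw [hcast, map_add, map_natCast]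
    have h1 : -(φ xb) ≤ M := hM ⟨φ, rfl⟩
    push_cast
    nlinarith [hmt, h1]
  · -- square in the completion
    have hmtv : ((m * t : ℕ) : R) ∈ v.asIdeal ^ N := by
      push_cast; erw [Nat.cast_mul]; exact Ideal.mul_mem_left _ _ htv
    have hα1 : α₀ - 1 ∈ v.asIdeal ^ N := by
      have hxe : α₀ - 1 = (x₀ - 1) + ((m * t : ℕ) : R) := by rw [hα₀]; ring
      rw [hxe]; exact Ideal.add_mem _ hx1 hmtv
    have hv1 : v.intValuationDef (α₀ - 1) ≤ ((ofAdd (-(N:ℤ)) : Multiplicative ℤ) : ℤᵐ⁰) :=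
      (v.intValuation_le_pow_iff_dvd (α₀ - 1) N).mpr (Ideal.dvd_span_singleton.mpr hα1)
    have hvlt : v.valuation K (algebraMap R K α₀ - 1) < v.valuation K (4 : K) := by
      have e1 : algebraMap R K α₀ - 1 = algebraMap R K (α₀ - 1) := by rw [map_sub, map_one]
      have e2 : (4 : K) = algebraMap R K (4 : R) := by exact (map_ofNat (algebraMap R K) 4).symm
      rw [e1, e2, valuation_of_algebraMap, valuation_of_algebraMap]
      exact lt_of_le_of_lt hv1 hN
    apply adic_sq
    have e3 : algebraMap K (v.adicCompletion K) (algebraMap R K α₀) - 1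
        = algebraMap K (v.adicCompletion K) (algebraMap R K α₀ - 1) := by rw [map_sub, map_one]
    have e4 : (4 : v.adicCompletion K) = algebraMap K (v.adicCompletion K) (4:K) := by
      rw [map_ofNat]
    rw [e3, e4,
      show (algebraMap K (v.adicCompletion K)) (algebraMap R K α₀ - 1)
        = ((algebraMap R K α₀ - 1 : K) : v.adicCompletion K) from rfl,
      show (algebraMap K (v.adicCompletion K)) (4:K) = (((4:K)) : v.adicCompletion K) from rfl,
      valuedAdicCompletion_eq_valuation', valuedAdicCompletion_eq_valuation']
    exact hvlt
end
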